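/- arXiv:2312.17333 — 10 statements merged into one kernel-verified Lean document; each statement's English description precedes it below -/
import Mathlib

section
/- Let H be a complex Hilbert space, A : H → H a bounded linear operator, and E a closed subspace of H containing the range of Im A := (A − A*)/(2i). Then there exist a complex Hilbert space G and bounded linear operators Φ : H → G and J : G → G such that J = J*, J ∘ J = I_G, (1/i)(A − A*) = Φ* ∘ J ∘ Φ, and the closure of the range of Φ* equals E. -/
noncomputable section

/-- An operator colligation `(H, G; A, Φ, J)` over the fixed internal space `H` with fundamental
operator `A`, together with the requirement that its channel subspace (the closure of the range
of `Φ*`) equals the prescribed subspace `E`. -/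
structure ColligationWithChannel
    (H : Type) [NormedAddCommGroup H] [InnerProductSpace ℂ H] [CompleteSpace H]
    (A : H →L[ℂ] H) (E : Submodule ℂ H) : Type 1 where
  G : Type
  [normG : NormedAddCommGroup G]
  [innerG : InnerProductSpace ℂ G]
  [complG : CompleteSpace G]
  Φ : H →L[ℂ] G
  J : G →L[ℂ] G
  J_selfadjoint : ContinuousLinearMap.adjoint J = J
  J_involutive : J ∘L J = ContinuousLinearMap.id ℂ G
  colligation : Complex.I⁻¹ • (A - ContinuousLinearMap.adjoint A)
      = ContinuousLinearMap.adjoint Φ ∘L (J ∘L Φ)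
  channel : (LinearMap.range (ContinuousLinearMap.adjoint Φ : G →ₗ[ℂ] H)).topologicalClosure = E

set_option maxHeartbeats 1000000 in
/-- For any bounded operator `A` on a complex Hilbert space and any closed subspace `E`
containing the range of `Im A = (A - A*)/(2i)`, there exists a colligation with fundamental
operator `A` whose channel subspace is `E`. -/
theorem statement0
    (H : Type) [NormedAddCommGroup H] [InnerProductSpace ℂ H] [CompleteSpace H]
    (A : H →L[ℂ] H) (E : Submodule ℂ H) (hE : IsClosed (E : Set H))
    (hrange : LinearMap.range ((((2 : ℂ) * Complex.I)⁻¹ • (A - ContinuousLinearMap.adjoint A) : H →L[ℂ] H) : H →ₗ[ℂ] H) ≤ E) :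
    Nonempty (ColligationWithChannel H A E) := by
  open ContinuousLinearMap in
  haveI : CompleteSpace E := hE.completeSpace_coe
  set B : H →L[ℂ] H := Complex.I⁻¹ • (A - ContinuousLinearMap.adjoint A) with hBdef
  have hBsa : ContinuousLinearMap.adjoint B = B := by
    rw [hBdef, ← star_eq_adjoint, star_smul, star_sub, star_eq_adjoint, star_eq_adjoint,
      adjoint_adjoint]
    simp [Complex.inv_I, sub_smul, neg_smul, smul_sub]
    abel
  -- range of B lands in E
  have hBE : ∀ x, B x ∈ E := by
    intro x
    have h1 : (((2:ℂ)*Complex.I)⁻¹ • (A - ContinuousLinearMap.adjoint A)) x ∈ E :=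
      hrange ⟨x, rfl⟩
    have h2 : B x = (2:ℂ) • ((((2:ℂ)*Complex.I)⁻¹ • (A - ContinuousLinearMap.adjoint A)) x) := by
      rw [hBdef]
      simp only [smul_apply, smul_smul]
      congr 1
      rw [mul_inv]
      ring
    rw [h2]; exact E.smul_mem _ h1
  set P : H →L[ℂ] E := E.orthogonalProjectionOnto with hP
  set ψ₁ : H →L[ℂ] E := (2:ℂ)⁻¹ • (P ∘L (B + 1)) with hψ₁
  set ψ₂ : H →L[ℂ] E := (2:ℂ)⁻¹ • (P ∘L (B - 1)) with hψ₂
  have hψ₁a : ContinuousLinearMap.adjoint ψ₁ = (2:ℂ)⁻¹ • ((B + 1) ∘L E.subtypeL) := by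
    rw [hψ₁, map_smulₛₗ, adjoint_comp, E.adjoint_orthogonalProjection,
      ← star_eq_adjoint, star_add, star_one, star_eq_adjoint, hBsa]
    simp [map_ofNat]
  have hψ₂a : ContinuousLinearMap.adjoint ψ₂ = (2:ℂ)⁻¹ • ((B - 1) ∘L E.subtypeL) := by
    rw [hψ₂, map_smulₛₗ, adjoint_comp, E.adjoint_orthogonalProjection,
      ← star_eq_adjoint, star_sub, star_one, star_eq_adjoint, hBsa]
    simp [map_ofNat]
  -- Q B = B and B Q = B, pointwise versions
  have hQB : ∀ x, ((P (B x) : H)) = B x := fun x =>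
    congrArg Subtype.val (E.orthogonalProjectionOnto_mem_subspace_eq_self ⟨B x, hBE x⟩)
  have hBQ : ∀ x : H, B ((P x : H)) = B x := by
    intro x
    have hop : B ∘L (E.subtypeL ∘L P) = B := by
      have h1 : (E.subtypeL ∘L P) ∘L B = B := by
        ext x; exact hQB x
      have := congrArg ContinuousLinearMap.adjoint h1
      rwa [adjoint_comp, adjoint_comp, E.adjoint_orthogonalProjection,
        E.adjoint_subtypeL, hBsa, ← comp_assoc] at this
    exact congrFun (congrArg DFunLike.coe hop) x
  -- the outer space
  set Φ : H →L[ℂ] WithLp 2 (↥E × ↥E) :=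
    (WithLp.prodContinuousLinearEquiv 2 ℂ ↥E ↥E).symm.toContinuousLinearMap ∘L (ψ₁.prod ψ₂)
    with hΦ
  set J : WithLp 2 (↥E × ↥E) →L[ℂ] WithLp 2 (↥E × ↥E) :=
    (WithLp.prodContinuousLinearEquiv 2 ℂ ↥E ↥E).symm.toContinuousLinearMap ∘L
      (((ContinuousLinearMap.id ℂ ↥E).prodMap (-(ContinuousLinearMap.id ℂ ↥E))) ∘L
        (WithLp.prodContinuousLinearEquiv 2 ℂ ↥E ↥E).toContinuousLinearMap) with hJ
  have hΦ1 : ∀ x, (Φ x).fst = ψ₁ x := fun _ => rfl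
  have hΦ2 : ∀ x, (Φ x).snd = ψ₂ x := fun _ => rfl
  have hJ1 : ∀ g : WithLp 2 (↥E × ↥E), (J g).fst = g.fst := fun _ => rfl
  have hJ2 : ∀ g : WithLp 2 (↥E × ↥E), (J g).snd = -g.snd := fun _ => rfl
  have hJsa : ContinuousLinearMap.adjoint J = J := by
    symm
    rw [eq_adjoint_iff]
    intro x y
    simp only [WithLp.prod_inner_apply, WithLp.ofLp_fst, WithLp.ofLp_snd]
    rw [hJ1, hJ2, hJ1, hJ2,
      inner_neg_left, inner_neg_right]
  have hJinv : J ∘L J = ContinuousLinearMap.id ℂ (WithLp 2 (↥E × ↥E)) := by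
    ext g
    have : J (J g) = g := by
      refine (WithLp.equiv 2 _).injective (Prod.ext ?_ ?_) <;> simp [hJ1, hJ2]
    simpa using this
  -- adjoint of Φ pointwise
  have hΦa : ∀ g : WithLp 2 (↥E × ↥E),
      ContinuousLinearMap.adjoint Φ g
        = ContinuousLinearMap.adjoint ψ₁ g.fst + ContinuousLinearMap.adjoint ψ₂ g.snd := by
    intro g
    apply ext_inner_left ℂ
    intro v
    rw [adjoint_inner_right, inner_add_right, adjoint_inner_right, adjoint_inner_right,
      WithLp.prod_inner_apply, WithLp.ofLp_fst, WithLp.ofLp_fst, WithLp.ofLp_snd, WithLp.ofLp_snd,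
      hΦ1, hΦ2]
  -- coercions of ψ values
  have e1 : ∀ x, ((ψ₁ x : H)) = (2:ℂ)⁻¹ • (B x + (P x : H)) := by
    intro x
    rw [hψ₁]
    simp only [smul_apply, comp_apply, add_apply, one_apply, map_add,
      Submodule.coe_smul, Submodule.coe_add]
    rw [hQB x]; rfl
  have e2 : ∀ x, ((ψ₂ x : H)) = (2:ℂ)⁻¹ • (B x - (P x : H)) := by
    intro x
    rw [hψ₂]
    simp only [smul_apply, comp_apply, sub_apply, one_apply, map_sub,
      Submodule.coe_smul, Submodule.coe_sub]
    rw [hQB x]; rfl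
  -- adjoints of ψ pointwise
  have e3 : ∀ u : E, ContinuousLinearMap.adjoint ψ₁ u = (2:ℂ)⁻¹ • (B (u:H) + (u:H)) := by
    intro u
    rw [hψ₁a]
    simp
  have e4 : ∀ u : E, ContinuousLinearMap.adjoint ψ₂ u = (2:ℂ)⁻¹ • (B (u:H) - (u:H)) := by
    intro u
    rw [hψ₂a]
    simp
  have hcol : B = ContinuousLinearMap.adjoint Φ ∘L (J ∘L Φ) := by
    ext x
    rw [comp_apply, comp_apply, hΦa, hJ1, hJ2, hΦ1, hΦ2, e3, e4]
    rw [Submodule.coe_neg, e1 x, e2 x]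
    simp only [map_smul, map_add, map_sub, map_neg]
    rw [hBQ x]
    module
  have hrangeΦa : LinearMap.range (ContinuousLinearMap.adjoint Φ : WithLp 2 (↥E × ↥E) →ₗ[ℂ] H) = E := by
    apply le_antisymm
    · rintro _ ⟨g, rfl⟩
      rw [ContinuousLinearMap.coe_coe, hΦa, e3, e4]
      exact E.add_mem
        (E.smul_mem _ (E.add_mem (hBE _) g.fst.2))
        (E.smul_mem _ (E.sub_mem (hBE _) g.snd.2))
    · intro x hx
      refine ⟨(WithLp.equiv 2 _).symm ((⟨x, hx⟩ : E), -(⟨x, hx⟩ : E)), ?_⟩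
      rw [ContinuousLinearMap.coe_coe, hΦa]
      have hf : ((WithLp.equiv 2 (↥E × ↥E)).symm ((⟨x, hx⟩ : E), -(⟨x, hx⟩ : E))).fst
          = (⟨x, hx⟩ : E) := rfl
      have hs : ((WithLp.equiv 2 (↥E × ↥E)).symm ((⟨x, hx⟩ : E), -(⟨x, hx⟩ : E))).snd
          = -(⟨x, hx⟩ : E) := rfl
      rw [hf, hs, e3, e4]
      simp only [Submodule.coe_neg, map_neg]
      module
  have hchan : (LinearMap.range (ContinuousLinearMap.adjoint Φ : WithLp 2 (↥E × ↥E) →ₗ[ℂ] H)).topologicalClosure = E := by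
    rw [hrangeΦa]
    exact hE.submodule_topologicalClosure_eq
  exact ⟨ColligationWithChannel.mk (WithLp 2 (↥E × ↥E)) Φ J hJsa hJinv hcol hchan⟩
end
end

section
/- Let (H, G; A, Φ, J) be an operator colligation, H1 a closed subspace of H invariant under A (A H1 ⊆ H1), H2 = H1^⊥, and P1, P2 the orthogonal projections of H onto H1, H2. Set A1 := A restricted to H1 (as an operator H1 → H1), A2 := P2 ∘ A restricted to H2 (as an operator H2 → H2), and Φj := Φ restricted to Hj (j = 1, 2). Then: (a) (Hj, G; Aj, Φj, J) is an operator colligation for j = 1, 2; (b) P1 ∘ A ∘ P2 = i Φ1* ∘ J ∘ Φ2 ∘ P2, so that A = A1 P1 + A2 P2 + i Φ1* J Φ2 P2; and (c) for every z ∈ ρ(A1) ∩ ρ(A2), z ∈ ρ(A) and the characteristic functions satisfy S_α(z) = S_{α1}(z) ∘ S_{α2}(z), i.e., I_G − i Φ (A − z)⁻¹ Φ* J = (I_G − i Φ1 (A1 − z)⁻¹ Φ1* J) ∘ (I_G − i Φ2 (A2 − z)⁻¹ Φ2* J). -/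
noncomputable section

open scoped InnerProductSpace

set_option maxHeartbeats 2000000

open ContinuousLinearMap

/-- Projection of a colligation onto an invariant subspace and its orthogonal complement:
the two projected quintuples are colligations, the fundamental operator decomposes in
triangular form `A = A1 P1 + A2 P2 + i Φ1* J Φ2 P2`, and the characteristic function
factorizes accordingly. -/
theorem statement2
    {H G : Type*}
    [NormedAddCommGroup H] [InnerProductSpace ℂ H] [CompleteSpace H]
    [NormedAddCommGroup G] [InnerProductSpace ℂ G] [CompleteSpace G]
    (A : H →L[ℂ] H) (Φ : H →L[ℂ] G) (J : G →L[ℂ] G)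
    (hJsa : adjoint J = J) (hJinv : J ∘L J = ContinuousLinearMap.id ℂ G)
    (hcol : Complex.I⁻¹ • (A - adjoint A) = adjoint Φ ∘L (J ∘L Φ))
    (K : Submodule ℂ H) [CompleteSpace K]
    (hinv : ∀ x ∈ K, A x ∈ K)
    (A1 : K →L[ℂ] K) (hA1 : ∀ x : K, (A1 x : H) = A x)
    (A2 : Kᗮ →L[ℂ] Kᗮ) (hA2 : ∀ x : Kᗮ, A2 x = Submodule.orthogonalProjectionOnto Kᗮ (A x))
    (Φ1 : K →L[ℂ] G) (hΦ1 : ∀ x : K, Φ1 x = Φ x)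
    (Φ2 : Kᗮ →L[ℂ] G) (hΦ2 : ∀ x : Kᗮ, Φ2 x = Φ x) :
    (Complex.I⁻¹ • (A1 - adjoint A1) = adjoint Φ1 ∘L (J ∘L Φ1)) ∧
    (Complex.I⁻¹ • (A2 - adjoint A2) = adjoint Φ2 ∘L (J ∘L Φ2)) ∧
    (∀ x : Kᗮ, (Submodule.orthogonalProjectionOnto K (A x) : H) = Complex.I • (adjoint Φ1 (J (Φ2 x)) : H)) ∧
    (∀ h : H, A h = (A1 (Submodule.orthogonalProjectionOnto K h) : H)
        + (A2 (Submodule.orthogonalProjectionOnto Kᗮ h) : H)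
        + Complex.I • (adjoint Φ1 (J (Φ2 (Submodule.orthogonalProjectionOnto Kᗮ h))) : H)) ∧
    (∀ z : ℂ, IsUnit (A1 - z • (1 : K →L[ℂ] K)) → IsUnit (A2 - z • (1 : Kᗮ →L[ℂ] Kᗮ)) →
      IsUnit (A - z • (1 : H →L[ℂ] H)) ∧
      (1 : G →L[ℂ] G) - Complex.I •
          (Φ ∘L Ring.inverse (A - z • (1 : H →L[ℂ] H)) ∘L adjoint Φ ∘L J) =
        ((1 : G →L[ℂ] G) - Complex.I •
            (Φ1 ∘L Ring.inverse (A1 - z • (1 : K →L[ℂ] K)) ∘L adjoint Φ1 ∘L J)) ∘L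
        ((1 : G →L[ℂ] G) - Complex.I •
            (Φ2 ∘L Ring.inverse (A2 - z • (1 : Kᗮ →L[ℂ] Kᗮ)) ∘L adjoint Φ2 ∘L J))) := by
  have hcolp : ∀ u v : H, Complex.I⁻¹ * (⟪u, A v⟫_ℂ - ⟪A u, v⟫_ℂ) = ⟪Φ u, J (Φ v)⟫_ℂ := by
    intro u v
    have h := congrArg (fun T : H →L[ℂ] H => ⟪u, T v⟫_ℂ) hcol
    simpa only [smul_apply, sub_apply, inner_smul_right, inner_sub_right, comp_apply,
      adjoint_inner_right] using h
  have ha1 : Complex.I⁻¹ • (A1 - adjoint A1) = adjoint Φ1 ∘L (J ∘L Φ1) := by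
    refine ContinuousLinearMap.ext fun x => ?_
    apply ext_inner_left ℂ
    intro y
    simp only [smul_apply, sub_apply, inner_smul_right, inner_sub_right, comp_apply,
      adjoint_inner_right]
    rw [Submodule.coe_inner, Submodule.coe_inner, hA1, hA1, hΦ1, hΦ1]
    exact hcolp y x
  have ha2 : Complex.I⁻¹ • (A2 - adjoint A2) = adjoint Φ2 ∘L (J ∘L Φ2) := by
    refine ContinuousLinearMap.ext fun x => ?_
    apply ext_inner_left ℂ
    intro y
    simp only [smul_apply, sub_apply, inner_smul_right, inner_sub_right, comp_apply,
      adjoint_inner_right]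
    rw [hA2, hA2, Submodule.inner_orthogonalProjectionOnto_eq_of_mem_left,
      Submodule.inner_orthogonalProjectionOnto_eq_of_mem_right, hΦ2, hΦ2]
    exact hcolp y x
  have hb : ∀ x : Kᗮ, (Submodule.orthogonalProjectionOnto K (A x) : H)
      = Complex.I • (adjoint Φ1 (J (Φ2 x)) : H) := by
    intro x
    apply ext_inner_left ℂ
    intro y
    have hm := (Submodule.mem_orthogonal K (↑x)).mp x.2
    have h2 := hcolp (↑(Submodule.orthogonalProjectionOnto K y)) ↑x
    rw [hm _ (hinv _ (Submodule.orthogonalProjectionOnto K y).2), sub_zero] at h2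
    have h3 : ⟪(↑(Submodule.orthogonalProjectionOnto K y) : H), A ↑x⟫_ℂ
        = Complex.I * ⟪Φ ↑(Submodule.orthogonalProjectionOnto K y), J (Φ ↑x)⟫_ℂ := by
      rw [← h2, ← mul_assoc, mul_inv_cancel₀ Complex.I_ne_zero, one_mul]
    calc ⟪y, (↑(Submodule.orthogonalProjectionOnto K (A ↑x)) : H)⟫_ℂ
        = ⟪(↑(Submodule.orthogonalProjectionOnto K y) : H), A ↑x⟫_ℂ :=
          (Submodule.inner_starProjection_left_eq_right K y (A ↑x)).symm
      _ = Complex.I * ⟪Φ ↑(Submodule.orthogonalProjectionOnto K y), J (Φ ↑x)⟫_ℂ := h3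
      _ = Complex.I * ⟪Φ1 (Submodule.orthogonalProjectionOnto K y), J (Φ2 x)⟫_ℂ := by rw [hΦ1, hΦ2]
      _ = Complex.I * ⟪Submodule.orthogonalProjectionOnto K y, adjoint Φ1 (J (Φ2 x))⟫_ℂ := by
          rw [adjoint_inner_right]
      _ = Complex.I * ⟪y, (↑(adjoint Φ1 (J (Φ2 x))) : H)⟫_ℂ := by
          rw [Submodule.inner_orthogonalProjectionOnto_eq_of_mem_right]
      _ = ⟪y, Complex.I • (↑(adjoint Φ1 (J (Φ2 x))) : H)⟫_ℂ := (inner_smul_right _ _ _).symm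
  have hd : ∀ h : H, A h = (A1 (Submodule.orthogonalProjectionOnto K h) : H)
      + (A2 (Submodule.orthogonalProjectionOnto Kᗮ h) : H)
      + Complex.I • (adjoint Φ1 (J (Φ2 (Submodule.orthogonalProjectionOnto Kᗮ h))) : H) := by
    intro h
    have e1 : A h = A ↑(Submodule.orthogonalProjectionOnto K h) + A ↑(Submodule.orthogonalProjectionOnto Kᗮ h) := by
      rw [← map_add, ← Submodule.starProjection_apply, ← Submodule.starProjection_apply,
      Submodule.starProjection_add_starProjection_orthogonal]
    rw [e1, hA1, hA2, ← hb, add_assoc]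
    congr 1
    rw [add_comm]
    exact (Submodule.starProjection_add_starProjection_orthogonal (K := K) _).symm
  refine ⟨ha1, ha2, hb, hd, ?_⟩
  -- pointwise projection facts
  have hp1k : ∀ k : K, Submodule.orthogonalProjectionOnto K (k : H) = k := fun k =>
    Submodule.orthogonalProjectionOnto_mem_subspace_eq_self k
  have hp2x : ∀ x : Kᗮ, Submodule.orthogonalProjectionOnto Kᗮ (x : H) = x := fun x =>
    Submodule.orthogonalProjectionOnto_mem_subspace_eq_self x
  have hp1x : ∀ x : Kᗮ, Submodule.orthogonalProjectionOnto K (x : H) = 0 := fun x =>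
    Submodule.orthogonalProjectionOnto_apply_of_mem_orthogonal x.2
  have hp2k : ∀ k : K, Submodule.orthogonalProjectionOnto Kᗮ (k : H) = 0 := fun k =>
    Submodule.orthogonalProjectionOnto_orthogonal_apply_eq_zero k.2
  have hadj1 : ∀ g : G, Submodule.orthogonalProjectionOnto K (adjoint Φ g) = adjoint Φ1 g := by
    intro g
    apply ext_inner_right ℂ
    intro y
    rw [Submodule.inner_orthogonalProjectionOnto_eq_of_mem_right, adjoint_inner_left, adjoint_inner_left, hΦ1]
  have hadj2 : ∀ g : G, Submodule.orthogonalProjectionOnto Kᗮ (adjoint Φ g) = adjoint Φ2 g := by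
    intro g
    apply ext_inner_right ℂ
    intro y
    rw [Submodule.inner_orthogonalProjectionOnto_eq_of_mem_right, adjoint_inner_left, adjoint_inner_left, hΦ2]
  have hP1A : ∀ h : H, Submodule.orthogonalProjectionOnto K (A h)
      = A1 (Submodule.orthogonalProjectionOnto K h)
        + Complex.I • adjoint Φ1 (J (Φ2 (Submodule.orthogonalProjectionOnto Kᗮ h))) := by
    intro h
    rw [hd h, map_add, map_add, map_smul, hp1k, hp1x, hp1k, add_zero]
  have hP2A : ∀ h : H, Submodule.orthogonalProjectionOnto Kᗮ (A h)
      = A2 (Submodule.orthogonalProjectionOnto Kᗮ h) := by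
    intro h
    rw [hd h, map_add, map_add, map_smul, hp2k, hp2x, hp2k, smul_zero, zero_add, add_zero]
  have hAx : ∀ x : Kᗮ, A (x : H)
      = Complex.I • ((adjoint Φ1 (J (Φ2 x)) : H)) + (A2 x : H) := by
    intro x
    conv_lhs => rw [← Submodule.starProjection_add_starProjection_orthogonal (K := K) (A ↑x),
      Submodule.starProjection_apply, Submodule.starProjection_apply]
    rw [hb, ← hA2]
  intro z hu1 hu2
  obtain ⟨B1, e1r, e1l, hB1⟩ : ∃ B : K →L[ℂ] K,
      (A1 - z • (1 : K →L[ℂ] K)) * B = 1 ∧ B * (A1 - z • (1 : K →L[ℂ] K)) = 1 ∧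
      Ring.inverse (A1 - z • (1 : K →L[ℂ] K)) = B := by
    obtain ⟨U1, hU1⟩ := hu1
    exact ⟨↑U1⁻¹, by rw [← hU1]; exact U1.mul_inv, by rw [← hU1]; exact U1.inv_mul,
      by rw [← hU1, Ring.inverse_unit]⟩
  obtain ⟨B2, e2r, e2l, hB2⟩ : ∃ B : Kᗮ →L[ℂ] Kᗮ,
      (A2 - z • (1 : Kᗮ →L[ℂ] Kᗮ)) * B = 1 ∧ B * (A2 - z • (1 : Kᗮ →L[ℂ] Kᗮ)) = 1 ∧
      Ring.inverse (A2 - z • (1 : Kᗮ →L[ℂ] Kᗮ)) = B := by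
    obtain ⟨U2, hU2⟩ := hu2
    exact ⟨↑U2⁻¹, by rw [← hU2]; exact U2.mul_inv, by rw [← hU2]; exact U2.inv_mul,
      by rw [← hU2, Ring.inverse_unit]⟩
  rw [hB1, hB2]
  -- cancellation lemmas
  have c1 : ∀ k : K, A1 (B1 k) = z • B1 k + k := by
    intro k
    have h0 := congrArg (fun f : K →L[ℂ] K => f k) e1r
    simp only [mul_apply_eq_comp, sub_apply, smul_apply, one_apply_eq_self] at h0
    exact sub_eq_iff_eq_add'.mp h0
  have c2 : ∀ x : Kᗮ, A2 (B2 x) = z • B2 x + x := by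
    intro x
    have h0 := congrArg (fun f : Kᗮ →L[ℂ] Kᗮ => f x) e2r
    simp only [mul_apply_eq_comp, sub_apply, smul_apply, one_apply_eq_self] at h0
    exact sub_eq_iff_eq_add'.mp h0
  have d1 : ∀ k : K, B1 (A1 k - z • k) = k := by
    intro k
    have h0 := congrArg (fun f : K →L[ℂ] K => f k) e1l
    simpa only [mul_apply_eq_comp, sub_apply, smul_apply, one_apply_eq_self] using h0
  have d2 : ∀ x : Kᗮ, B2 (A2 x - z • x) = x := by
    intro x
    have h0 := congrArg (fun f : Kᗮ →L[ℂ] Kᗮ => f x) e2l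
    simpa only [mul_apply_eq_comp, sub_apply, smul_apply, one_apply_eq_self] using h0
  obtain ⟨R, hRapp⟩ : ∃ R : H →L[ℂ] H, ∀ h : H, R h = (B1 (Submodule.orthogonalProjectionOnto K h) : H)
      - Complex.I • (B1 (adjoint Φ1 (J (Φ2 (B2 (Submodule.orthogonalProjectionOnto Kᗮ h))))) : H)
      + (B2 (Submodule.orthogonalProjectionOnto Kᗮ h) : H) := by
    refine ⟨K.subtypeL ∘L B1 ∘L (Submodule.orthogonalProjectionOnto K : H →L[ℂ] K)
      - Complex.I • (K.subtypeL ∘L B1 ∘L adjoint Φ1 ∘L J ∘L Φ2 ∘L B2 ∘L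
          (Submodule.orthogonalProjectionOnto Kᗮ : H →L[ℂ] Kᗮ))
      + Kᗮ.subtypeL ∘L B2 ∘L (Submodule.orthogonalProjectionOnto Kᗮ : H →L[ℂ] Kᗮ), fun h => ?_⟩
    simp only [add_apply, sub_apply, smul_apply, comp_apply, Submodule.subtypeL_apply]
  have key1 : ∀ h : H, (A - z • (1 : H →L[ℂ] H)) (R h) = h := by
    intro h
    rw [sub_apply, smul_apply, one_apply_eq_self]
    rw [hRapp]
    rw [map_add A, map_sub A, map_smul A]
    rw [← hA1, ← hA1, hAx]
    rw [c1, c1, c2]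
    push_cast
    conv_rhs => rw [← Submodule.starProjection_add_starProjection_orthogonal (K := K) h,
      Submodule.starProjection_apply, Submodule.starProjection_apply]
    module
  have key2 : ∀ h : H, R ((A - z • (1 : H →L[ℂ] H)) h) = h := by
    intro h
    rw [sub_apply, smul_apply, one_apply_eq_self, hRapp, map_sub (Submodule.orthogonalProjectionOnto K),
      map_smul (Submodule.orthogonalProjectionOnto K), hP1A, map_sub (Submodule.orthogonalProjectionOnto Kᗮ),
      map_smul (Submodule.orthogonalProjectionOnto Kᗮ), hP2A, d2, add_sub_right_comm, map_add, map_smul, d1]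
    push_cast
    conv_rhs => rw [← Submodule.starProjection_add_starProjection_orthogonal (K := K) h,
      Submodule.starProjection_apply, Submodule.starProjection_apply]
    module
  have hmul1 : (A - z • (1 : H →L[ℂ] H)) * R = 1 := by
    ext h; rw [mul_apply_eq_comp]; exact key1 h
  have hmul2 : R * (A - z • (1 : H →L[ℂ] H)) = 1 := by
    ext h; rw [mul_apply_eq_comp]; exact key2 h
  have hUnit : IsUnit (A - z • (1 : H →L[ℂ] H)) := ⟨⟨_, R, hmul1, hmul2⟩, rfl⟩
  have hRinv : Ring.inverse (A - z • (1 : H →L[ℂ] H)) = R :=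
    Ring.inverse_unit ⟨_, R, hmul1, hmul2⟩
  refine ⟨hUnit, ?_⟩
  rw [hRinv]
  ext g
  simp only [comp_apply, sub_apply, smul_apply, one_apply_eq_self, hRapp, hadj1, hadj2, map_add, map_sub,
    map_smul, ← hΦ1, ← hΦ2, smul_smul, Complex.I_mul_I]
  module
end
end

section
/- Let H be a complex Hilbert space, A : H → H a bounded linear operator, H0 a closed subspace with A H0 ⊆ H0, and let A0 : H0 → H0 be the restriction of A to H0. Let G ⊆ ℂ be an open connected set all of whose points are regular for A, i.e., G ⊆ ρ(A). If there exists a point z0 ∈ G with z0 ∈ ρ(A0), then every point of G belongs to ρ(A0). -/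
noncomputable section

/-- If `H0` is a closed subspace invariant under the bounded operator `A`, `A0` is the
restriction of `A` to `H0`, and `G` is an open connected set of regular points of `A`
containing a regular point of `A0`, then every point of `G` is a regular point of `A0`. -/
theorem statement3
    {H : Type*} [NormedAddCommGroup H] [InnerProductSpace ℂ H] [CompleteSpace H]
    (A : H →L[ℂ] H)
    (H0 : Submodule ℂ H) (hH0 : IsClosed (H0 : Set H))
    (hinv : ∀ x ∈ H0, A x ∈ H0)
    (A0 : H0 →L[ℂ] H0) (hA0 : ∀ x : H0, (A0 x : H) = A x)
    (G : Set ℂ) (hGopen : IsOpen G) (hGconn : IsConnected G)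
    (hGreg : ∀ z ∈ G, IsUnit (A - z • (1 : H →L[ℂ] H)))
    (z0 : ℂ) (hz0 : z0 ∈ G) (hz0reg : IsUnit (A0 - z0 • (1 : H0 →L[ℂ] H0))) :
    ∀ z ∈ G, IsUnit (A0 - z • (1 : H0 →L[ℂ] H0)) := by
  haveI : CompleteSpace H0 := hH0.completeSpace_coe
  set B : ℂ → (H →L[ℂ] H) := fun z => A - z • 1 with hB
  set B0 : ℂ → (H0 →L[ℂ] H0) := fun z => A0 - z • 1 with hB0
  have hcont : Continuous B := by
    apply Continuous.sub continuous_const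
    exact continuous_id.smul continuous_const
  -- relation between B and B0
  have hrel : ∀ z (x : H0), ((B0 z) x : H) = B z (x : H) := by
    intro z x
    simp [hB, hB0, hA0]
  -- key lemma 1: if both are units, the resolvent of A preserves H0
  have key1 : ∀ z, IsUnit (B z) → IsUnit (B0 z) →
      ∀ x ∈ H0, Ring.inverse (B z) x ∈ H0 := by
    intro z hz hz0' x hx
    set y : H0 := Ring.inverse (B0 z) ⟨x, hx⟩ with hy
    have h1 : (B0 z) y = ⟨x, hx⟩ := by
      rw [hy, ← ContinuousLinearMap.mul_apply, Ring.mul_inverse_cancel _ hz0']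
      simp
    have h2 : B z (y : H) = x := by
      rw [← hrel, h1]
    have : Ring.inverse (B z) (B z (y : H)) = (y : H) := by
      rw [← ContinuousLinearMap.mul_apply, Ring.inverse_mul_cancel _ hz]
      simp
    rw [h2] at this
    rw [this]
    exact y.2
  -- key lemma 2: if B z is a unit and its inverse preserves H0, then B0 z is a unit
  have key2 : ∀ z, IsUnit (B z) → (∀ x ∈ H0, Ring.inverse (B z) x ∈ H0) →
      IsUnit (B0 z) := by
    intro z hz hpre
    have hinvBz : ∀ x : H, Ring.inverse (B z) (B z x) = x := by
      intro x
      rw [← ContinuousLinearMap.mul_apply, Ring.inverse_mul_cancel _ hz]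
      simp
    have hBzinv : ∀ x : H, B z (Ring.inverse (B z) x) = x := by
      intro x
      rw [← ContinuousLinearMap.mul_apply, Ring.mul_inverse_cancel _ hz]
      simp
    have hker : (B0 z).ker = ⊥ := by
      show LinearMap.ker (B0 z : H0 →ₗ[ℂ] H0) = ⊥
      rw [LinearMap.ker_eq_bot']
      intro u hu
      rw [ContinuousLinearMap.coe_coe] at hu
      have : (B z) (u : H) = 0 := by rw [← hrel, hu]; simp
      have : (u : H) = 0 := by
        have h := hinvBz (u : H)
        rw [this] at h
        simpa using h.symm
      exact Subtype.ext this
    have hrange : (B0 z).range = ⊤ := by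
      show LinearMap.range (B0 z : H0 →ₗ[ℂ] H0) = ⊤
      rw [LinearMap.range_eq_top]
      intro v
      refine ⟨⟨Ring.inverse (B z) (v : H), hpre _ v.2⟩, ?_⟩
      apply Subtype.ext
      rw [ContinuousLinearMap.coe_coe]
      rw [hrel]
      exact hBzinv (v : H)
    set e := ContinuousLinearEquiv.ofBijective (B0 z) hker hrange with he
    have hco : ⇑e = ⇑(B0 z) := ContinuousLinearEquiv.coeFn_ofBijective (B0 z) hker hrange
    refine ⟨⟨B0 z, (e.symm : H0 →L[ℂ] H0), ?_, ?_⟩, rfl⟩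
    · ext x
      simp only [ContinuousLinearMap.mul_apply, ContinuousLinearMap.coe_coe,
        ContinuousLinearMap.one_apply]
      have h : (B0 z) (e.symm x) = x := by
        rw [show (B0 z) (e.symm x) = e (e.symm x) from (congrFun hco _).symm]
        exact e.apply_symm_apply x
      exact congrArg Subtype.val h
    · ext x
      simp only [ContinuousLinearMap.mul_apply, ContinuousLinearMap.coe_coe,
        ContinuousLinearMap.one_apply]
      have h : e.symm ((B0 z) x) = x := by
        rw [show (B0 z) x = e x from (congrFun hco _).symm]
        exact e.symm_apply_apply x
      exact congrArg Subtype.val h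
  -- the two open sets
  set U : Set ℂ := {z | IsUnit (B z) ∧ IsUnit (B0 z)} with hU
  set V : Set ℂ := {z | IsUnit (B z) ∧ ∃ x ∈ H0, Ring.inverse (B z) x ∉ H0} with hV
  have hUopen : IsOpen U := by
    have h1 : IsOpen {z | IsUnit (B z)} := Units.isOpen.preimage hcont
    have hcont0 : Continuous B0 := by
      apply Continuous.sub continuous_const
      exact continuous_id.smul continuous_const
    have h2 : IsOpen {z | IsUnit (B0 z)} :=
      (Units.isOpen (R := H0 →L[ℂ] H0)).preimage hcont0
    exact h1.inter h2
  have hVopen : IsOpen V := by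
    rw [isOpen_iff_mem_nhds]
    rintro z ⟨hz, x, hx, hnx⟩
    have hc : ContinuousAt (fun w => Ring.inverse (B w) x) z := by
      have h1 : ContinuousAt Ring.inverse (B z) := by
        obtain ⟨u, hu⟩ := hz
        rw [← hu]
        exact NormedRing.inverse_continuousAt u
      have h2 : ContinuousAt (fun w => Ring.inverse (B w)) z :=
        h1.comp hcont.continuousAt
      exact (ContinuousLinearMap.apply ℂ H x).continuous.continuousAt.comp h2
    have hnb1 : {w | Ring.inverse (B w) x ∉ H0} ∈ nhds z := by
      have : ((H0 : Set H)ᶜ) ∈ nhds (Ring.inverse (B z) x) :=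
        hH0.isOpen_compl.mem_nhds hnx
      exact hc this
    have hnb2 : {w | IsUnit (B w)} ∈ nhds z :=
      (Units.isOpen.preimage hcont).mem_nhds hz
    filter_upwards [hnb1, hnb2] with w h1 h2
    exact ⟨h2, x, hx, h1⟩
  have hdisj : Disjoint U V := by
    rw [Set.disjoint_left]
    rintro z ⟨hz1, hz2⟩ ⟨_, x, hx, hnx⟩
    exact hnx (key1 z hz1 hz2 x hx)
  have hsub : G ⊆ U ∪ V := by
    intro z hz
    have hBz := hGreg z hz
    by_cases h : ∀ x ∈ H0, Ring.inverse (B z) x ∈ H0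
    · exact Or.inl ⟨hBz, key2 z hBz h⟩
    · push_neg at h
      exact Or.inr ⟨hBz, h⟩
  have hne : (G ∩ U).Nonempty := ⟨z0, hz0, hGreg z0 hz0, hz0reg⟩
  have hGU : G ⊆ U :=
    hGconn.isPreconnected.subset_left_of_subset_union hUopen hVopen hdisj hsub hne
  intro z hz
  exact (hGU hz).2
end
end

section
/- Let (H, G; A, Φ, J) be an operator colligation with characteristic function S(z) = I_G − i Φ (A − z I_H)⁻¹ Φ* J, and set R(z) = (A − z I_H)⁻¹ ∘ Φ* ∘ J for z ∈ ρ(A). Then for every z ∈ ρ(A) the identity S(z)* ∘ J ∘ S(z) − J = 2 (Im z) · R(z)* ∘ R(z) holds. Consequently S(z)* J S(z) − J is a nonnegative operator when Im z > 0, zero when Im z = 0, and nonpositive when Im z < 0 (for z ∈ ρ(A)). -/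
noncomputable section

open ContinuousLinearMap
open scoped ComplexInnerProductSpace ComplexOrder

set_option maxHeartbeats 2000000

/-- The `J`-property of the characteristic function: for `z` in the resolvent set of `A`,
`S(z)* J S(z) - J = 2 (Im z) R(z)* R(z)` where `R(z) = (A - z)⁻¹ Φ* J`; consequently
`S(z)* J S(z) - J` is nonnegative for `Im z > 0`, zero for `Im z = 0` and nonpositive for
`Im z < 0`. -/
theorem statement7
    {H G : Type*}
    [NormedAddCommGroup H] [InnerProductSpace ℂ H] [CompleteSpace H]
    [NormedAddCommGroup G] [InnerProductSpace ℂ G] [CompleteSpace G]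
    (A : H →L[ℂ] H) (Φ : H →L[ℂ] G) (J : G →L[ℂ] G)
    (hJsa : adjoint J = J) (hJinv : J ∘L J = ContinuousLinearMap.id ℂ G)
    (hcol : Complex.I⁻¹ • (A - adjoint A) = adjoint Φ ∘L (J ∘L Φ))
    (z : ℂ) (hz : IsUnit (A - z • (1 : H →L[ℂ] H)))
    (S : G →L[ℂ] G)
    (hS : S = (1 : G →L[ℂ] G) - Complex.I •
        (Φ ∘L Ring.inverse (A - z • (1 : H →L[ℂ] H)) ∘L adjoint Φ ∘L J))
    (R : G →L[ℂ] H)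
    (hR : R = Ring.inverse (A - z • (1 : H →L[ℂ] H)) ∘L adjoint Φ ∘L J) :
    (adjoint S ∘L J ∘L S - J = ((2 * z.im : ℝ) : ℂ) • (adjoint R ∘L R)) ∧
    (0 < z.im → ∀ g : G, 0 ≤ ⟪(adjoint S ∘L J ∘L S - J) g, g⟫) ∧
    (z.im = 0 → adjoint S ∘L J ∘L S - J = 0) ∧
    (z.im < 0 → ∀ g : G, ⟪(adjoint S ∘L J ∘L S - J) g, g⟫ ≤ 0) := by
  set B : H →L[ℂ] H := A - z • (1 : H →L[ℂ] H) with hB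
  set T : H →L[ℂ] H := Ring.inverse B with hT
  have hBT : B ∘L T = 1 := by rw [← mul_def]; exact Ring.mul_inverse_cancel B hz
  have hTB : T ∘L B = 1 := by rw [← mul_def]; exact Ring.inverse_mul_cancel B hz
  have hadj_one : adjoint (1 : H →L[ℂ] H) = 1 := by
    rw [← star_eq_adjoint, star_one]
  have hTBadj : adjoint T ∘L adjoint B = 1 := by
    rw [← adjoint_comp, hBT, hadj_one]
  have hBadj : adjoint B = adjoint A - (starRingEnd ℂ z) • 1 := by
    rw [hB, map_sub]
    congr 1
    rw [← star_eq_adjoint, star_smul, star_one]; rfl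
  -- the colligation identity in terms of B
  have hC : adjoint Φ ∘L (J ∘L Φ)
      = Complex.I⁻¹ • (B - adjoint B)
        + (Complex.I⁻¹ * (z - starRingEnd ℂ z)) • (1 : H →L[ℂ] H) := by
    rw [← hcol, hBadj, hB]
    module
  -- applied forms
  have hBTapp : ∀ x : H, B (T x) = x := fun x => by
    have := congrArg (fun f : H →L[ℂ] H => f x) hBT
    simpa using this
  have hTBadjapp : ∀ x : H, adjoint T (adjoint B x) = x := fun x => by
    have := congrArg (fun f : H →L[ℂ] H => f x) hTBadj
    simpa using this
  have hCapp : ∀ x : H, adjoint Φ (J (Φ x))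
      = Complex.I⁻¹ • (B x - adjoint B x)
        + (Complex.I⁻¹ * (z - starRingEnd ℂ z)) • x := fun x => by
    have := congrArg (fun f : H →L[ℂ] H => f x) hC
    simpa using this
  -- the key middle identity, applied
  have hmid : ∀ x : H, adjoint T (adjoint Φ (J (Φ (T x))))
      = Complex.I⁻¹ • (adjoint T x - T x)
        + (Complex.I⁻¹ * (z - starRingEnd ℂ z)) • adjoint T (T x) := fun x => by
    rw [hCapp (T x), map_add, map_smul, map_smul, map_sub, hBTapp, hTBadjapp]
  -- adjoint of S
  have hSadj : adjoint S
      = 1 + Complex.I • (J ∘L (Φ ∘L (adjoint T ∘L adjoint Φ))) := by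
    rw [hS, map_sub]
    have h1 : adjoint (Complex.I • (Φ ∘L Ring.inverse (A - z • (1 : H →L[ℂ] H)) ∘L adjoint Φ ∘L J))
        = (starRingEnd ℂ Complex.I) • adjoint (Φ ∘L Ring.inverse (A - z • (1 : H →L[ℂ] H)) ∘L adjoint Φ ∘L J) :=
      LinearIsometryEquiv.map_smulₛₗ adjoint _ _
    rw [h1]
    simp only [adjoint_comp, adjoint_adjoint, hJsa, ← hB, ← hT, Complex.conj_I, neg_smul,
      sub_neg_eq_add]
    have h2 : ContinuousLinearMap.adjoint (1 : G →L[ℂ] G) = 1 := by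
      rw [← star_eq_adjoint, star_one]
    rw [h2]
    simp [comp_assoc]
  -- main identity
  have main : adjoint S ∘L J ∘L S - J = ((2 * z.im : ℝ) : ℂ) • (adjoint R ∘L R) := by
    ext g
    rw [hSadj, hS, hR]
    simp only [← hB, ← hT, coe_sub', Pi.sub_apply, comp_apply, coe_smul', Pi.smul_apply,
      sub_apply, smul_apply, one_apply, add_apply, coe_add', Pi.add_apply,
      map_add, map_sub, map_smul, adjoint_comp, adjoint_adjoint, hJsa]
    rw [hmid (adjoint Φ (J g))]
    have hJJ : ∀ y : G, J (J y) = y := fun y => by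
      have := congrArg (fun f : G →L[ℂ] G => f y) hJinv
      simpa using this
    simp only [map_add, map_smul, map_sub, hJJ, Complex.inv_I, Complex.sub_conj]
    have hcoef : (-Complex.I * (((2 * z.im : ℝ) : ℂ) * Complex.I)) = ((2 * z.im : ℝ) : ℂ) := by
      ring_nf
      rw [Complex.I_sq]
      ring
    rw [hcoef]
    simp only [smul_add, smul_sub, smul_smul]
    simp only [← mul_assoc, mul_neg, neg_mul, Complex.I_mul_I, neg_neg, one_mul, one_smul,
      neg_smul]
    simp only [ContinuousLinearMap.one_apply, mul_one]
    module
  refine ⟨main, ?_, ?_, ?_⟩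
  · intro him g
    rw [main]
    have : ⟪(((2 * z.im : ℝ) : ℂ) • (adjoint R ∘L R)) g, g⟫
        = ((2 * z.im : ℝ) : ℂ) * ⟪R g, R g⟫ := by
      simp only [coe_smul', Pi.smul_apply, comp_apply, inner_smul_left, adjoint_inner_left,
        Complex.conj_ofReal]
    rw [this, inner_self_eq_norm_sq_to_K,
      show (RCLike.ofReal ‖R g‖ : ℂ) = ((‖R g‖:ℝ):ℂ) from rfl,
      ← Complex.ofReal_pow, ← Complex.ofReal_mul,
      show (0:ℂ) = ((0:ℝ):ℂ) by norm_num, Complex.real_le_real]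
    positivity
  · intro him
    rw [main, him]
    simp
  · intro him g
    rw [main]
    have : ⟪(((2 * z.im : ℝ) : ℂ) • (adjoint R ∘L R)) g, g⟫
        = ((2 * z.im : ℝ) : ℂ) * ⟪R g, R g⟫ := by
      simp only [coe_smul', Pi.smul_apply, comp_apply, inner_smul_left, adjoint_inner_left,
        Complex.conj_ofReal]
    rw [this, inner_self_eq_norm_sq_to_K,
      show (RCLike.ofReal ‖R g‖ : ℂ) = ((‖R g‖:ℝ):ℂ) from rfl,
      ← Complex.ofReal_pow, ← Complex.ofReal_mul,
      show (0:ℂ) = ((0:ℝ):ℂ) by norm_num, Complex.real_le_real]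
    nlinarith [sq_nonneg ‖R g‖]
end
end

section
/- Let G be a finite-dimensional complex inner product space, P an orthogonal projection on G, Q = I − P, and J = P − Q. Let S0 : G → G be a linear operator satisfying S0 J S0* ≤ J (i.e., J − S0 J S0* is a nonnegative operator). Then the operator P − S0 Q is invertible, and the Potapov–Ginzburg transform W0 := (P − S0 Q)⁻¹ (S0 P − Q) is a contraction: I − W0 W0* ≥ 0, equivalently ‖W0‖ ≤ 1. -/
noncomputable section

set_option maxHeartbeats 1000000

private lemma aux_sq8 {x y : ℝ} (hx : 0 ≤ x) (_hy : 0 ≤ y) (h : 0 ≤ x ^ 2 - y ^ 2) :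
    y ≤ x := by nlinarith

open ContinuousLinearMap
open scoped ComplexInnerProductSpace ComplexOrder

/-- The Potapov–Ginzburg transform: if `P` is an orthogonal projection on a finite-dimensional
complex inner product space, `Q = 1 - P`, `J = P - Q`, and `S0` satisfies `S0 J S0* ≤ J`, then
`P - S0 Q` is invertible and `W0 = (P - S0 Q)⁻¹ (S0 P - Q)` is a contraction. -/
theorem statement8
    {G : Type*} [NormedAddCommGroup G] [InnerProductSpace ℂ G] [FiniteDimensional ℂ G]
    (P : G →L[ℂ] G) (hPproj : P ∘L P = P) (hPsa : adjoint P = P)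
    (Q : G →L[ℂ] G) (hQ : Q = 1 - P)
    (J : G →L[ℂ] G) (hJ : J = P - Q)
    (S0 : G →L[ℂ] G)
    (hS0 : ∀ g : G, 0 ≤ ⟪(J - S0 ∘L J ∘L adjoint S0) g, g⟫) :
    IsUnit (P - S0 ∘L Q) ∧
    (∀ g : G, 0 ≤ ⟪((1 : G →L[ℂ] G) -
        (Ring.inverse (P - S0 ∘L Q) ∘L (S0 ∘L P - Q)) ∘L
          adjoint (Ring.inverse (P - S0 ∘L Q) ∘L (S0 ∘L P - Q))) g, g⟫) ∧
    ‖Ring.inverse (P - S0 ∘L Q) ∘L (S0 ∘L P - Q)‖ ≤ 1 := by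
  have hPP : P * P = P := hPproj
  have hPs : star P = P := hPsa
  have hQs : star Q = Q := by rw [hQ, star_sub, star_one, hPs]
  have hPQ : P * Q = 0 := by rw [hQ, mul_sub, mul_one, hPP, sub_self]
  have hQP : Q * P = 0 := by rw [hQ, sub_mul, one_mul, hPP, sub_self]
  have hQQ : Q * Q = Q := by
    rw [hQ, sub_mul, one_mul, mul_sub, mul_one, hPP, sub_self, sub_zero]
  have hJJ : J * J = 1 := by
    have : J * J = P * P - P * Q - Q * P + Q * Q := by rw [hJ]; noncomm_ring
    rw [this, hPP, hPQ, hQP, hQQ, sub_zero, sub_zero, hQ]; abel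
  set A : G →L[ℂ] G := P - S0 ∘L Q with hA
  set B : G →L[ℂ] G := S0 ∘L P - Q with hB
  set D : G →L[ℂ] G := J - S0 ∘L J ∘L adjoint S0 with hD
  have hAm : A = P - S0 * Q := rfl
  have hBm : B = S0 * P - Q := rfl
  have hDm : D = J - S0 * J * star S0 := by
    rw [hD, star_eq_adjoint]; rfl
  clear_value A B D
  have pair : ∀ (T : G →L[ℂ] G) (x y : G), ⟪T x, y⟫ = ⟪x, star T y⟫ := by
    intro T x y; rw [star_eq_adjoint]; exact (adjoint_inner_right T x y).symm
  -- key identity : A A* - B B* = D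
  have h1 : A * star A = P + S0 * Q * star S0 := by
    have hs : star A = P - Q * star S0 := by rw [hAm, star_sub, star_mul, hPs, hQs]
    have : A * star A = P * P - P * Q * star S0 - S0 * (Q * P) + S0 * (Q * Q) * star S0 := by
      rw [hs, hAm]; noncomm_ring
    rw [this, hPP, hPQ, hQP, hQQ]; simp
  have h2 : B * star B = S0 * P * star S0 + Q := by
    have hs : star B = P * star S0 - Q := by rw [hBm, star_sub, star_mul, hPs, hQs]
    have : B * star B = S0 * (P * P) * star S0 - S0 * (P * Q) - Q * P * star S0 + Q * Q := by
      rw [hs, hBm]; noncomm_ring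
    rw [this, hPP, hPQ, hQP, hQQ]; simp
  have key : A * star A - B * star B = D := by
    rw [h1, h2, hDm, hJ]; noncomm_ring
  -- inner product decomposition
  have e : ∀ g : G, ⟪D g, g⟫ = ((‖star A g‖ ^ 2 - ‖star B g‖ ^ 2 : ℝ) : ℂ) := by
    intro g
    have h : ⟪D g, g⟫ = ⟪(A * star A) g, g⟫ - ⟪(B * star B) g, g⟫ := by
      rw [← key]; simp [inner_sub_left]
    rw [h, mul_apply_eq_comp, mul_apply_eq_comp, pair A, pair B,
      inner_self_eq_norm_sq_to_K, inner_self_eq_norm_sq_to_K]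
    norm_cast
  have ereal : ∀ g : G, (0:ℝ) ≤ ‖star A g‖ ^ 2 - ‖star B g‖ ^ 2 := by
    intro g
    have h := hS0 g
    rw [e g] at h
    exact Complex.zero_le_real.mp h
  -- injectivity of star A
  have h0 : ∀ g : G, star A g = 0 → g = 0 := by
    intro g hg
    have hB0 : star B g = 0 := by
      have h := ereal g
      rw [hg, norm_zero] at h
      have h2 : ‖star B g‖ ≤ 0 := aux_sq8 le_rfl (norm_nonneg _) h
      exact norm_eq_zero.mp (le_antisymm h2 (norm_nonneg _))
    have hAB : A - B = 1 - S0 := by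
      rw [hAm, hBm, hQ]; noncomm_ring
    have hfix : star S0 g = g := by
      have : (star A - star B) g = (1 - star S0) g := by
        rw [← star_sub, hAB, star_sub, star_one]
      rw [sub_apply, hg, hB0, sub_apply, one_apply_eq_self, sub_self] at this
      have := this.symm
      rwa [sub_eq_zero, eq_comm] at this
    have hsA : star A = P - Q * star S0 := by rw [hAm, star_sub, star_mul, hPs, hQs]
    have hJg : J g = 0 := by
      have : star A g = P g - Q (star S0 g) := by rw [hsA]; simp [mul_apply]
      rw [hg, hfix] at this
      rw [hJ, sub_apply, ← this]
    have : (J * J) g = 0 := by rw [mul_apply_eq_comp, hJg, map_zero]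
    rwa [hJJ, one_apply_eq_self] at this
  -- invertibility
  have hbij : Function.Bijective ((star A : G →L[ℂ] G) : G → G) := by
    have hinj : Function.Injective ((star A : G →L[ℂ] G) : G → G) := by
      intro a b hab
      have : star A (a - b) = 0 := by rw [map_sub, hab, sub_self]
      exact sub_eq_zero.mp (h0 _ this)
    exact ⟨hinj, LinearMap.injective_iff_surjective.mp hinj⟩
  have hAunit : IsUnit A := isUnit_star.mp (ContinuousLinearMap.isUnit_iff_bijective.mpr hbij)
  refine ⟨hAunit, ?_⟩
  set U : G →L[ℂ] G := Ring.inverse A with hU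
  have hUA : U * A = 1 := Ring.inverse_mul_cancel A hAunit
  have hsAsU : star A * star U = 1 := by rw [← star_mul, hUA, star_one]
  set W : G →L[ℂ] G := U ∘L B with hW
  have hWm : W = U * B := rfl
  have hWstar : star W = star B * star U := by rw [hWm, star_mul]
  clear_value U W
  have hKey2 : (1 : G →L[ℂ] G) - W ∘L adjoint W = U * D * star U := by
    have hBB : B * star B = A * star A - D := by rw [← key]; abel
    have h3 : W * star W = U * A * (star A * star U) - U * D * star U := by
      calc W * star W = U * (B * star B) * star U := by rw [hWstar, hWm]; noncomm_ring
        _ = U * (A * star A - D) * star U := by rw [hBB]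
        _ = U * A * (star A * star U) - U * D * star U := by noncomm_ring
    have hcomp : W ∘L adjoint W = W * star W := by rw [star_eq_adjoint]; rfl
    rw [hcomp, h3, hUA, hsAsU, mul_one]
    abel
  have hpos : ∀ g : G, 0 ≤ ⟪((1 : G →L[ℂ] G) - W ∘L adjoint W) g, g⟫ := by
    intro g
    rw [hKey2]
    have : (U * D * star U) g = U (D (star U g)) := by simp [mul_apply]
    rw [this]
    have hp : ⟪U (D (star U g)), g⟫ = ⟪D (star U g), star U g⟫ := by
      rw [pair U]
    rw [hp]
    exact hS0 (star U g)
  refine ⟨hpos, ?_⟩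
  -- norm bound
  have hcon : ∀ g : G, ‖adjoint W g‖ ≤ ‖g‖ := by
    intro g
    have h := hpos g
    have heq : ⟪((1 : G →L[ℂ] G) - W ∘L adjoint W) g, g⟫
        = ((‖g‖ ^ 2 - ‖adjoint W g‖ ^ 2 : ℝ) : ℂ) := by
      rw [sub_apply, inner_sub_left, one_apply_eq_self, comp_apply,
        ← star_eq_adjoint, pair W, star_eq_adjoint,
        inner_self_eq_norm_sq_to_K, inner_self_eq_norm_sq_to_K]
      norm_cast
    rw [heq] at h
    have hr : (0:ℝ) ≤ ‖g‖ ^ 2 - ‖adjoint W g‖ ^ 2 := Complex.zero_le_real.mp h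
    exact aux_sq8 (norm_nonneg g) (norm_nonneg _) hr
  have hnorm : ‖adjoint W‖ ≤ 1 :=
    opNorm_le_bound _ zero_le_one (fun g => by simpa using hcon g)
  calc ‖W‖ = ‖adjoint W‖ := (LinearIsometryEquiv.norm_map adjoint W).symm
    _ ≤ 1 := hnorm
end
end

section
/- Let (H, G; A, Φ, J) be an operator colligation, let Re A = (A + A*)/2, and define V(z) = (1/2) Φ (Re A − z I_H)⁻¹ Φ* for z ∈ ρ(Re A). Then for every z ∈ ρ(A) ∩ ρ(Re A): the operators S(z) + I_G and I_G + i V(z) J are invertible; (S(z) + I_G)(I_G + i V(z) J) = 2 I_G = (I_G + i V(z) J)(S(z) + I_G); V(z) = i (S(z) − I_G)(S(z) + I_G)⁻¹ J = i (S(z) + I_G)⁻¹ (S(z) − I_G) J; and S(z) = (I_G − i V(z) J)(I_G + i V(z) J)⁻¹ = (I_G + i V(z) J)⁻¹ (I_G − i V(z) J). Here S(z) = I_G − i Φ (A − z I_H)⁻¹ Φ* J is the characteristic function. -/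
noncomputable section

open ContinuousLinearMap

set_option maxHeartbeats 1000000 in
/-- The Cayley-type relation between the characteristic function `S(z)` of a colligation and
the function `V(z) = (1/2) Φ (Re A - z)⁻¹ Φ*`: for `z ∈ ρ(A) ∩ ρ(Re A)` the operators
`S(z) + I` and `I + i V(z) J` are invertible, their product (in both orders) is `2 I`, and the
mutual linear fractional formulas hold. -/
theorem statement9
    {H G : Type*}
    [NormedAddCommGroup H] [InnerProductSpace ℂ H] [CompleteSpace H]
    [NormedAddCommGroup G] [InnerProductSpace ℂ G] [CompleteSpace G]
    (A : H →L[ℂ] H) (Φ : H →L[ℂ] G) (J : G →L[ℂ] G)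
    (hJsa : adjoint J = J) (hJinv : J ∘L J = ContinuousLinearMap.id ℂ G)
    (hcol : Complex.I⁻¹ • (A - adjoint A) = adjoint Φ ∘L (J ∘L Φ))
    (z : ℂ)
    (hzA : IsUnit (A - z • (1 : H →L[ℂ] H)))
    (hzRe : IsUnit ((2 : ℂ)⁻¹ • (A + adjoint A) - z • (1 : H →L[ℂ] H)))
    (S : G →L[ℂ] G)
    (hS : S = (1 : G →L[ℂ] G) - Complex.I •
        (Φ ∘L Ring.inverse (A - z • (1 : H →L[ℂ] H)) ∘L adjoint Φ ∘L J))
    (V : G →L[ℂ] G)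
    (hV : V = (2 : ℂ)⁻¹ •
        (Φ ∘L Ring.inverse ((2 : ℂ)⁻¹ • (A + adjoint A) - z • (1 : H →L[ℂ] H)) ∘L adjoint Φ)) :
    IsUnit (S + 1) ∧
    IsUnit ((1 : G →L[ℂ] G) + Complex.I • (V ∘L J)) ∧
    ((S + 1) ∘L ((1 : G →L[ℂ] G) + Complex.I • (V ∘L J)) = (2 : ℂ) • (1 : G →L[ℂ] G)) ∧
    (((1 : G →L[ℂ] G) + Complex.I • (V ∘L J)) ∘L (S + 1) = (2 : ℂ) • (1 : G →L[ℂ] G)) ∧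
    (V = Complex.I • ((S - 1) ∘L Ring.inverse (S + 1) ∘L J)) ∧
    (V = Complex.I • (Ring.inverse (S + 1) ∘L (S - 1) ∘L J)) ∧
    (S = ((1 : G →L[ℂ] G) - Complex.I • (V ∘L J)) ∘L
        Ring.inverse ((1 : G →L[ℂ] G) + Complex.I • (V ∘L J))) ∧
    (S = Ring.inverse ((1 : G →L[ℂ] G) + Complex.I • (V ∘L J)) ∘L
        ((1 : G →L[ℂ] G) - Complex.I • (V ∘L J))) := by
  set T : H →L[ℂ] H := A - z • 1 with hTdef
  set Tr : H →L[ℂ] H := (2 : ℂ)⁻¹ • (A + adjoint A) - z • 1 with hTrdef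
  set P : H →L[ℂ] H := Ring.inverse T with hPdef
  set Q : H →L[ℂ] H := Ring.inverse Tr with hQdef
  have hPT : P * T = 1 := Ring.inverse_mul_cancel _ hzA
  have hTP : T * P = 1 := Ring.mul_inverse_cancel _ hzA
  have hQTr : Q * Tr = 1 := Ring.inverse_mul_cancel _ hzRe
  have hTrQ : Tr * Q = 1 := Ring.mul_inverse_cancel _ hzRe
  set B : H →L[ℂ] H := adjoint Φ ∘L (J ∘L Φ) with hBdef
  have hAB : A - adjoint A = Complex.I • B := by
    rw [← hcol, smul_smul, mul_inv_cancel₀ Complex.I_ne_zero, one_smul]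
  have hdiff : T - Tr = (Complex.I * (2 : ℂ)⁻¹) • B := by
    have h1 : T - Tr = (2 : ℂ)⁻¹ • (A - adjoint A) := by
      rw [hTdef, hTrdef]
      module
    rw [h1, hAB, smul_smul, mul_comm]
  have hK1 : Q - P = P * (T - Tr) * Q := by
    calc Q - P = P * T * Q - P * (Tr * Q) := by rw [hPT, hTrQ, one_mul, mul_one]
    _ = P * (T - Tr) * Q := by noncomm_ring
  have hK2 : Q - P = Q * (T - Tr) * P := by
    calc Q - P = Q * (T * P) - Q * Tr * P := by rw [hTP, hQTr, one_mul, mul_one]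
    _ = Q * (T - Tr) * P := by noncomm_ring
  set Sp : G →L[ℂ] G := Φ ∘L (P ∘L (adjoint Φ ∘L J)) with hSpdef
  set Wr : G →L[ℂ] G := Φ ∘L (Q ∘L (adjoint Φ ∘L J)) with hWrdef
  have hSsp : S = 1 - Complex.I • Sp := hS
  have hVJ : V ∘L J = (2 : ℂ)⁻¹ • Wr := by
    rw [hV, hWrdef]
    simp only [smul_comp, comp_assoc]
  have hVW : V = (2 : ℂ)⁻¹ • (Wr ∘L J) := by
    rw [hV, hWrdef]
    simp only [comp_assoc, hJinv]
    congr 1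
  have hCross1 : Wr - Sp = (Complex.I * (2 : ℂ)⁻¹) • (Sp * Wr) := by
    have e1 : Wr - Sp = Φ ∘L ((Q - P) ∘L (adjoint Φ ∘L J)) := by
      simp only [sub_comp, comp_sub, hWrdef, hSpdef]
    rw [e1, hK1, hdiff]
    simp only [mul_def, hBdef, smul_comp, comp_smul, comp_assoc, hSpdef, hWrdef, mul_def]
  have hCross2 : Wr - Sp = (Complex.I * (2 : ℂ)⁻¹) • (Wr * Sp) := by
    have e1 : Wr - Sp = Φ ∘L ((Q - P) ∘L (adjoint Φ ∘L J)) := by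
      simp only [sub_comp, comp_sub, hWrdef, hSpdef]
    rw [e1, hK2, hdiff]
    simp only [mul_def, hBdef, smul_comp, comp_smul, comp_assoc, hSpdef, hWrdef, mul_def]
  set X : G →L[ℂ] G := S + 1 with hXdef
  set Y : G →L[ℂ] G := 1 + Complex.I • (V ∘L J) with hYdef
  have hX : X = (2 : ℂ) • 1 - Complex.I • Sp := by
    rw [hXdef, hSsp]; module
  have hY : Y = 1 + (Complex.I * (2 : ℂ)⁻¹) • Wr := by
    rw [hYdef, hVJ, smul_smul]
  set u : G →L[ℂ] G := Sp * Wr with hudef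
  have hWu : Wr = Sp + (Complex.I * (2 : ℂ)⁻¹) • u := by
    rw [← hCross1]; module
  have hXY : X * Y = (2 : ℂ) • 1 := by
    rw [hX, hY]
    simp only [sub_mul, mul_add, mul_one, one_mul, smul_mul_assoc, mul_smul_comm, smul_smul,
      ← hudef]
    rw [hWu]
    module
  set u2 : G →L[ℂ] G := Wr * Sp with hu2def
  have hWu2 : Wr = Sp + (Complex.I * (2 : ℂ)⁻¹) • u2 := by
    rw [← hCross2]; module
  have hYX : Y * X = (2 : ℂ) • 1 := by
    rw [hX, hY]
    simp only [add_mul, mul_sub, mul_one, one_mul, smul_mul_assoc, mul_smul_comm, smul_smul,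
      ← hu2def]
    rw [hWu2]
    module
  have half2 : ((2 : ℂ)⁻¹ * 2) = 1 := by norm_num
  set Xu : (G →L[ℂ] G)ˣ := ⟨X, (2 : ℂ)⁻¹ • Y,
    by rw [mul_smul_comm, hXY, smul_smul, half2, one_smul],
    by rw [smul_mul_assoc, hYX, smul_smul, half2, one_smul]⟩ with hXudef
  set Yu : (G →L[ℂ] G)ˣ := ⟨Y, (2 : ℂ)⁻¹ • X,
    by rw [mul_smul_comm, hYX, smul_smul, half2, one_smul],
    by rw [smul_mul_assoc, hXY, smul_smul, half2, one_smul]⟩ with hYudef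
  have huX : IsUnit X := ⟨Xu, rfl⟩
  have huY : IsUnit Y := ⟨Yu, rfl⟩
  have hinvX : Ring.inverse X = (2 : ℂ)⁻¹ • Y := by
    rw [show X = (Xu : G →L[ℂ] G) from rfl, Ring.inverse_unit]; rfl
  have hinvY : Ring.inverse Y = (2 : ℂ)⁻¹ • X := by
    rw [show Y = (Yu : G →L[ℂ] G) from rfl, Ring.inverse_unit]; rfl
  have hSpY : Sp * Y = Wr := by
    rw [hY, mul_add, mul_one, mul_smul_comm, ← hudef, hWu]
  have hYSp : Y * Sp = Wr := by
    rw [hY, add_mul, one_mul, smul_mul_assoc, ← hu2def, hWu2]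
  refine ⟨huX, huY, ?_, ?_, ?_, ?_, ?_, ?_⟩
  · rw [← mul_def]; exact hXY
  · rw [← mul_def]; exact hYX
  · -- V = I • ((S - 1) ∘L Ring.inverse (S+1) ∘L J)
    have hS1 : S - 1 = (-Complex.I) • Sp := by rw [hSsp]; module
    rw [hinvX, hS1]
    simp only [← mul_def, smul_mul_assoc, mul_smul_comm, smul_smul, mul_assoc]
    rw [← mul_assoc Sp Y J, hSpY, hVW, ← mul_def]
    congr 1
    have h1 : Complex.I * -Complex.I = 1 := by
      rw [mul_neg, Complex.I_mul_I, neg_neg]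
    have h2 : Complex.I * ((2 : ℂ)⁻¹ * -Complex.I) = 2⁻¹ := by
      calc Complex.I * ((2 : ℂ)⁻¹ * -Complex.I) = Complex.I * -Complex.I * 2⁻¹ := by ring
      _ = 2⁻¹ := by rw [h1, one_mul]
    exact h2.symm
  · have hS1 : S - 1 = (-Complex.I) • Sp := by rw [hSsp]; module
    rw [hinvX, hS1]
    simp only [← mul_def, smul_mul_assoc, mul_smul_comm, smul_smul, mul_assoc]
    rw [← mul_assoc Y Sp J, hYSp, hVW, ← mul_def]
    congr 1
    have h1 : Complex.I * -Complex.I = 1 := by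
      rw [mul_neg, Complex.I_mul_I, neg_neg]
    have h2 : Complex.I * (-Complex.I * (2 : ℂ)⁻¹) = 2⁻¹ := by
      calc Complex.I * (-Complex.I * (2 : ℂ)⁻¹) = Complex.I * -Complex.I * 2⁻¹ := by ring
      _ = 2⁻¹ := by rw [h1, one_mul]
    exact h2.symm
  · have h2Y : (1 : G →L[ℂ] G) - Complex.I • (V ∘L J) = (2 : ℂ) • 1 - Y := by
      rw [hYdef]; module
    rw [h2Y, hinvY, ← mul_def]
    simp only [sub_mul, mul_sub, smul_mul_assoc, mul_smul_comm, one_mul, mul_one, smul_smul, hYX]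
    rw [hXdef]
    module
  · have h2Y : (1 : G →L[ℂ] G) - Complex.I • (V ∘L J) = (2 : ℂ) • 1 - Y := by
      rw [hYdef]; module
    rw [h2Y, hinvY, ← mul_def]
    simp only [sub_mul, mul_sub, smul_mul_assoc, mul_smul_comm, one_mul, mul_one, smul_smul, hXY]
    rw [hXdef]
    module
end
end

section
/- Let H be a complex Hilbert space and A : H → H a bounded linear operator whose imaginary part Im A = (A − A*)/(2i) is a compact operator (A is quasihermitian). Then: (i) every accumulation point of the spectrum σ(A) belongs to the spectrum σ(Re A) of the real part Re A = (A + A*)/2; (ii) every point z ∈ σ(A) with Im z ≠ 0 is an eigenvalue of A, and the eigenspace ker(A − z I) is finite-dimensional. -/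
noncomputable section

open ContinuousLinearMap

namespace QuasiHermAux

open Metric Set Filter

variable {H : Type*} [NormedAddCommGroup H] [InnerProductSpace ℂ H] [CompleteSpace H]

lemma compact_image (C : H →L[ℂ] H) (hC : IsCompactOperator ⇑C) :
    ∃ M : Set H, IsCompact M ∧ ∀ x : H, ‖x‖ ≤ 1 → C x ∈ M := by
  have hC' : IsCompactOperator ⇑(C.toLinearMap) := hC
  obtain ⟨M, hMc, hMs⟩ := hC'.image_closedBall_subset_compact 1
  exact ⟨M, hMc, fun x hx => hMs ⟨x, by simpa [Metric.mem_closedBall] using hx, rfl⟩⟩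

/-- Finite dimensionality of the kernel of `1 + C` for compact `C`. -/
theorem findim_ker_one_add (C : H →L[ℂ] H) (hC : IsCompactOperator ⇑C) :
    FiniteDimensional ℂ (LinearMap.ker ((1 + C : H →L[ℂ] H) : H →ₗ[ℂ] H)) := by
  obtain ⟨M, hMc, hMs⟩ := compact_image C hC
  set N : Submodule ℂ H := LinearMap.ker ((1 + C : H →L[ℂ] H) : H →ₗ[ℂ] H) with hN
  have hNc : IsClosed (N : Set H) := ContinuousLinearMap.isClosed_ker (1 + C)
  have key : IsCompact (Metric.closedBall (0 : N) 1) := by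
    have himg : Subtype.val '' (Metric.closedBall (0 : N) 1) = (N : Set H) ∩ Metric.closedBall 0 1 := by
      ext y
      constructor
      · rintro ⟨⟨x, hx⟩, hb, rfl⟩
        refine ⟨hx, ?_⟩
        simpa [Metric.mem_closedBall] using hb
      · rintro ⟨hy, hb⟩
        exact ⟨⟨y, hy⟩, by simpa [Metric.mem_closedBall, Submodule.norm_coe] using hb, rfl⟩
    rw [Topology.IsEmbedding.subtypeVal.isCompact_iff, himg]
    apply hMc.of_isClosed_subset (hNc.inter Metric.isClosed_closedBall)
    rintro y ⟨hy, hb⟩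
    have h0 : y + C y = 0 := by
      have := LinearMap.mem_ker.mp hy
      simpa [ContinuousLinearMap.add_apply] using this
    have : C (-y) = y := by
      rw [map_neg, eq_neg_of_add_eq_zero_right h0, neg_neg]
    rw [← this]
    exact hMs (-y) (by simpa [Metric.mem_closedBall] using hb)
  exact FiniteDimensional.of_isCompact_closedBall₀ ℂ one_pos key

/-- Bounded below for injective `1 + C`. -/
theorem bddBelow_one_add (C : H →L[ℂ] H) (hC : IsCompactOperator ⇑C)
    (hker : ∀ x : H, x + C x = 0 → x = 0) :
    ∃ c > 0, ∀ x : H, c * ‖x‖ ≤ ‖x + C x‖ := by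
  by_contra hcon
  push_neg at hcon
  have hseq : ∀ n : ℕ, ∃ u : H, ‖u‖ = 1 ∧ ‖u + C u‖ < 1 / (n + 1) := by
    intro n
    obtain ⟨x, hx⟩ := hcon (1 / (n + 1)) (by positivity)
    have hx0 : x ≠ 0 := by
      rintro rfl; simp at hx
    refine ⟨‖x‖⁻¹ • x, ?_, ?_⟩
    · simp [norm_smul, inv_mul_cancel₀ (norm_ne_zero_iff.mpr hx0)]
    · have hxn : (0:ℝ) < ‖x‖ := norm_pos_iff.mpr hx0
      have : ‖x‖⁻¹ • x + C (‖x‖⁻¹ • x) = ‖x‖⁻¹ • (x + C x) := by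
        rw [map_smul_of_tower, smul_add]
      rw [this, norm_smul]
      simp only [norm_inv, norm_norm]
      rw [inv_mul_lt_iff₀ hxn]
      calc ‖x + C x‖ < 1 / (↑n + 1) * ‖x‖ := hx
        _ = ‖x‖ * (1 / (↑n + 1)) := by ring
        _ = _ := by ring
  choose u hu1 hu2 using hseq
  obtain ⟨M, hMc, hMs⟩ := compact_image C hC
  obtain ⟨y, -, φ, hφ, hy⟩ := hMc.tendsto_subseq (fun n => hMs (u n) (hu1 n).le)
  have hT0 : Filter.Tendsto (fun n => u n + C (u n)) Filter.atTop (nhds 0) := by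
    rw [tendsto_zero_iff_norm_tendsto_zero]
    apply squeeze_zero (fun n => norm_nonneg _) (fun n => (hu2 n).le)
    exact tendsto_one_div_add_atTop_nhds_zero_nat
  have hT0' : Filter.Tendsto (fun n => u (φ n) + C (u (φ n))) Filter.atTop (nhds 0) :=
    hT0.comp hφ.tendsto_atTop
  have huy : Filter.Tendsto (fun n => u (φ n)) Filter.atTop (nhds (-y)) := by
    have : (fun n => u (φ n)) = fun n => (u (φ n) + C (u (φ n))) - C (u (φ n)) := by
      funext n; rw [add_sub_cancel_right]
    rw [this]
    simpa using hT0'.sub hy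
  have hny : ‖-y‖ = 1 := by
    have := (continuous_norm.tendsto (-y)).comp huy
    have h1 : Filter.Tendsto (fun n => ‖u (φ n)‖) Filter.atTop (nhds ‖-y‖) := this
    have h2 : Filter.Tendsto (fun _ : ℕ => (1:ℝ)) Filter.atTop (nhds 1) := tendsto_const_nhds
    have : (fun n => ‖u (φ n)‖) = fun _ => (1:ℝ) := funext fun n => hu1 (φ n)
    rw [this] at h1
    exact tendsto_nhds_unique h1 h2
  have : -y + C (-y) = 0 := by
    have hcont : Filter.Tendsto (fun n => u (φ n) + C (u (φ n))) Filter.atTop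
        (nhds (-y + C (-y))) := by
      exact (huy.add ((C.continuous.tendsto (-y)).comp huy))
    exact tendsto_nhds_unique hcont hT0'
  have := hker _ this
  rw [this] at hny
  simp at hny


/-- Fredholm alternative: injective `1 + C` is surjective. -/
theorem surj_one_add (C : H →L[ℂ] H) (hC : IsCompactOperator ⇑C)
    (hker : ∀ x : H, x + C x = 0 → x = 0) :
    Function.Surjective ⇑(1 + C) := by
  set T : H →L[ℂ] H := 1 + C with hT
  have hTapp : ∀ x : H, T x = x + C x := fun x => by
    simp [hT, ContinuousLinearMap.add_apply]
  obtain ⟨c, hc, hbb⟩ := bddBelow_one_add C hC hker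
  -- bounded below for powers
  have hbbn : ∀ n : ℕ, ∀ x : H, c ^ n * ‖x‖ ≤ ‖(T ^ n) x‖ := by
    intro n
    induction n with
    | zero => intro x; simp
    | succ n ih =>
      intro x
      have h1 : (T ^ (n + 1)) x = (T ^ n) (T x) := by
        rw [pow_succ, ContinuousLinearMap.mul_apply]
      rw [h1, pow_succ]
      calc c ^ n * c * ‖x‖ = c ^ n * (c * ‖x‖) := by ring
        _ ≤ c ^ n * ‖T x‖ := by
            apply mul_le_mul_of_nonneg_left _ (by positivity)
            rw [hTapp]; exact hbb x
        _ ≤ ‖(T ^ n) (T x)‖ := ih (T x)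
  have hinjn : ∀ n : ℕ, ∀ x : H, (T ^ n) x = 0 → x = 0 := by
    intro n x hx
    have h1 := hbbn n x
    rw [hx, norm_zero] at h1
    have hcn : 0 < c ^ n := pow_pos hc n
    have h2 : ‖x‖ ≤ 0 := by nlinarith
    exact norm_le_zero_iff.mp h2
  by_contra hsurj
  obtain ⟨y0, hy0⟩ : ∃ y0 : H, ∀ u, T u ≠ y0 := by
    rw [Function.Surjective] at hsurj
    push_neg at hsurj
    obtain ⟨y0, hy0⟩ := hsurj
    exact ⟨y0, hy0⟩
  set Hn : ℕ → Submodule ℂ H := fun n => LinearMap.range ((T ^ n : H →L[ℂ] H) : H →ₗ[ℂ] H) with hHn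
  have hclosed : ∀ n, IsClosed ((Hn n : Set H)) := by
    intro n
    have hcn : 0 < c ^ n := pow_pos hc n
    have hanti : AntilipschitzWith (⟨(c ^ n)⁻¹, by positivity⟩ : NNReal) ⇑(T ^ n) := by
      apply ContinuousLinearMap.antilipschitz_of_bound
      intro x
      have h1 := hbbn n x
      show ‖x‖ ≤ (c ^ n)⁻¹ * _
      rw [← div_eq_inv_mul, le_div_iff₀ hcn]
      linarith
    have h2 := hanti.isClosed_range (T ^ n).uniformContinuous
    have h3 : (Hn n : Set H) = Set.range ⇑(T ^ n) := by
      rw [hHn]; exact LinearMap.coe_range _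
    rw [h3]; exact h2
  have hmem_succ : ∀ (n : ℕ) (x : H), x ∈ Hn n → T x ∈ Hn (n + 1) := by
    rintro n x ⟨u, rfl⟩
    exact ⟨u, by rw [pow_succ']; rfl⟩
  have hmono : ∀ {n m : ℕ}, n ≤ m → Hn m ≤ Hn n := by
    intro n m hnm x hx
    obtain ⟨u, rfl⟩ := hx
    refine ⟨(T ^ (m - n)) u, ?_⟩
    show (T ^ n) ((T ^ (m - n)) u) = (T ^ m) u
    rw [← ContinuousLinearMap.mul_apply, ← pow_add]
    congr 2
    omega
  have hv : ∀ n, (T ^ n) y0 ∈ Hn n := fun n => ⟨y0, rfl⟩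
  have hvn : ∀ n, (T ^ n) y0 ∉ Hn (n + 1) := by
    rintro n ⟨u, hu⟩
    apply hy0 u
    have h1 : (T ^ n) (T u) = (T ^ n) y0 := by
      rw [← ContinuousLinearMap.mul_apply, ← pow_succ]; exact hu
    have h2 : (T ^ n) (T u - y0) = 0 := by rw [map_sub, h1, sub_self]
    have h3 := hinjn n _ h2
    rwa [sub_eq_zero] at h3
  have hex : ∀ n : ℕ, ∃ x : H, x ∈ Hn n ∧ x ∈ (Hn (n + 1))ᗮ ∧ ‖x‖ = 1 := by
    intro n
    haveI : CompleteSpace (Hn (n + 1)) := (hclosed (n + 1)).completeSpace_coe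
    set v := (T ^ n) y0 with hvdef
    set b := v - (Submodule.orthogonalProjection (Hn (n + 1)) v : H) with hb
    have hbO : b ∈ (Hn (n + 1))ᗮ := Submodule.sub_starProjection_mem_orthogonal (K := Hn (n + 1)) v
    have hb0 : b ≠ 0 := by
      intro h
      apply hvn n
      have : v = (Submodule.orthogonalProjection (Hn (n + 1)) v : H) := by rwa [sub_eq_zero] at h
      rw [← hvdef, this]
      exact Submodule.coe_mem _
    have hbH : b ∈ Hn n := by
      apply Submodule.sub_mem _ (hv n)
      exact hmono (Nat.le_succ n) (Submodule.coe_mem _)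
    refine ⟨‖b‖⁻¹ • b, Submodule.smul_of_tower_mem _ _ hbH,
      Submodule.smul_of_tower_mem _ _ hbO, ?_⟩
    rw [norm_smul, norm_inv, norm_norm, inv_mul_cancel₀ (norm_ne_zero_iff.mpr hb0)]
  choose x hxm hxo hx1 using hex
  have hsep : ∀ n m : ℕ, n < m → 1 ≤ ‖C (x n) - C (x m)‖ := by
    intro n m hnm
    have hCd : C (x n) - C (x m) = -x n + (T (x n) - T (x m) + x m) := by
      rw [hTapp (x n), hTapp (x m)] at *
      have : C (x n) = T (x n) - x n := by rw [hTapp]; abel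
      have h2 : C (x m) = T (x m) - x m := by rw [hTapp]; abel
      rw [this, h2]; abel
    have hh : T (x n) - T (x m) + x m ∈ Hn (n + 1) := by
      refine Submodule.add_mem _ (Submodule.sub_mem _ ?_ ?_) ?_
      · exact hmem_succ n _ (hxm n)
      · exact hmono (by omega) (hmem_succ m _ (hxm m))
      · exact hmono (by omega : n + 1 ≤ m) (hxm m)
    have hperp : (inner ℂ (-x n) (T (x n) - T (x m) + x m) : ℂ) = 0 := by
      have h0 := Submodule.inner_right_of_mem_orthogonal hh (hxo n)
      rw [inner_neg_left, inner_eq_zero_symm.mp h0, neg_zero]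
    have hnorm := norm_add_sq_eq_norm_sq_add_norm_sq_of_inner_eq_zero _ _ hperp
    rw [← hCd, norm_neg, hx1 n] at hnorm
    nlinarith [norm_nonneg (C (x n) - C (x m)), norm_nonneg (T (x n) - T (x m) + x m),
      sq_nonneg (‖T (x n) - T (x m) + x m‖)]
  obtain ⟨M, hMc, hMs⟩ := compact_image C hC
  obtain ⟨a, -, φ, hφ, ha⟩ := hMc.tendsto_subseq (fun n => hMs (x n) (hx1 n).le)
  have hcs := ha.cauchySeq
  rw [Metric.cauchySeq_iff] at hcs
  obtain ⟨N, hN⟩ := hcs 1 one_pos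
  have h1 := hN (N + 1) (by omega) N (le_refl N)
  have h2 := hsep (φ N) (φ (N + 1)) (hφ (by omega))
  rw [dist_eq_norm, norm_sub_rev] at h1
  simp only [Function.comp_apply] at h1
  linarith

/-- Fredholm alternative, unit form. -/
theorem isUnit_one_add (C : H →L[ℂ] H) (hC : IsCompactOperator ⇑C)
    (hker : ∀ x : H, x + C x = 0 → x = 0) : IsUnit (1 + C : H →L[ℂ] H) := by
  have hinj : LinearMap.ker ((1 + C : H →L[ℂ] H) : H →ₗ[ℂ] H) = ⊥ := by
    rw [LinearMap.ker_eq_bot']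
    intro m hm
    exact hker m (by simpa [ContinuousLinearMap.add_apply] using hm)
  have hsurj : LinearMap.range ((1 + C : H →L[ℂ] H) : H →ₗ[ℂ] H) = ⊤ :=
    LinearMap.range_eq_top.mpr (surj_one_add C hC hker)
  let e := ContinuousLinearEquiv.ofBijective (1 + C) hinj hsurj
  have he : ∀ y, e y = (1 + C) y := fun y => by
    rw [ContinuousLinearEquiv.coeFn_ofBijective]
  refine ⟨⟨1 + C, (e.symm : H →L[ℂ] H), ?_, ?_⟩, rfl⟩
  · ext v
    simp only [ContinuousLinearMap.mul_apply, ContinuousLinearMap.one_apply,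
      ContinuousLinearEquiv.coe_coe]
    rw [← he, e.apply_symm_apply]
  · ext v
    simp only [ContinuousLinearMap.mul_apply, ContinuousLinearMap.one_apply,
      ContinuousLinearEquiv.coe_coe]
    rw [← he, e.symm_apply_apply]


/-- Finite-rank approximation of compact operators on a Hilbert space. -/
theorem finite_rank_approx (C : H →L[ℂ] H) (hC : IsCompactOperator ⇑C) {ε : ℝ} (hε : 0 < ε) :
    ∃ W : Submodule ℂ H, FiniteDimensional ℂ W ∧
      ∃ F : H →L[ℂ] H, (∀ x, F x ∈ W) ∧ ‖C - F‖ ≤ ε := by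
  obtain ⟨M, hMc, hMs⟩ := compact_image C hC
  obtain ⟨t, -, htfin, htcov⟩ := hMc.finite_cover_balls (half_pos hε)
  set W : Submodule ℂ H := Submodule.span ℂ t with hW
  haveI hWfin : FiniteDimensional ℂ W := FiniteDimensional.span_of_finite ℂ htfin
  haveI : CompleteSpace W := FiniteDimensional.complete ℂ W
  set F : H →L[ℂ] H := W.subtypeL.comp ((Submodule.orthogonalProjection W).comp C) with hF
  have hFW : ∀ x, F x ∈ W := fun x => Submodule.coe_mem _
  refine ⟨W, hWfin, F, hFW, ?_⟩
  apply ContinuousLinearMap.opNorm_le_bound _ hε.le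
  intro x
  rcases eq_or_ne x 0 with rfl | hx0
  · simp
  · have hxn : (0:ℝ) < ‖x‖ := norm_pos_iff.mpr hx0
    set y := ‖x‖⁻¹ • x with hy
    have hyn : ‖y‖ = 1 := by
      rw [hy, norm_smul, norm_inv, norm_norm, inv_mul_cancel₀ hxn.ne']
    have hCy : C y ∈ M := hMs y hyn.le
    obtain ⟨v, hvt, hvmem⟩ := Set.mem_iUnion₂.mp (htcov hCy)
    have hvW : v ∈ W := Submodule.subset_span hvt
    have hmin : ‖C y - (Submodule.orthogonalProjection W (C y) : H)‖ ≤ ‖C y - v‖ := by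
      change ‖C y - W.starProjection (C y)‖ ≤ ‖C y - v‖
      rw [Submodule.starProjection_minimal]
      exact ciInf_le ⟨0, fun z => by rintro ⟨w, rfl⟩; positivity⟩ (⟨v, hvW⟩ : W)
    have hvdist : ‖C y - v‖ < ε / 2 := by
      rw [← dist_eq_norm]; exact Metric.mem_ball.mp hvmem
    have hCFy : ‖(C - F) y‖ ≤ ε := by
      have : (C - F) y = C y - (Submodule.orthogonalProjection W (C y) : H) := by
        simp [hF, ContinuousLinearMap.sub_apply]
      rw [this]
      linarith
    have hxy : (C - F) x = ‖x‖ • (C - F) y := by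
      rw [hy, map_smul_of_tower, smul_smul, mul_inv_cancel₀ hxn.ne', one_smul]
    rw [hxy, norm_smul, norm_norm]
    calc ‖x‖ * ‖(C - F) y‖ ≤ ‖x‖ * ε := by
          exact mul_le_mul_of_nonneg_left hCFy hxn.le
      _ = ε * ‖x‖ := by ring

/-- Invertibility of `1 + N` for finite-rank `N` is detected by a determinant. -/
theorem isUnit_one_add_iff_det (W : Submodule ℂ H) [FiniteDimensional ℂ W]
    (N : H →L[ℂ] H) (hNW : ∀ x, N x ∈ W) :
    IsUnit (1 + N : H →L[ℂ] H) ↔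
      LinearMap.det (LinearMap.id + (N : H →ₗ[ℂ] H).restrict (fun x _ => hNW x)) ≠ 0 := by
  set e : W →ₗ[ℂ] W := LinearMap.id + (N : H →ₗ[ℂ] H).restrict (fun x _ => hNW x) with he
  have heapp : ∀ w : W, (e w : H) = (w : H) + N (w : H) := fun w => by
    simp [he, LinearMap.restrict_apply]
  constructor
  · -- unit ⇒ det ≠ 0
    intro hU
    have hinj : LinearMap.ker e = ⊥ := by
      rw [LinearMap.ker_eq_bot']
      intro w hw
      have h1 : (w : H) + N (w : H) = 0 := by
        rw [← heapp, hw, Submodule.coe_zero]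
      have h2 : (1 + N) (w : H) = 0 := by
        simpa [ContinuousLinearMap.add_apply] using h1
      obtain ⟨u, hu⟩ := hU
      have h3 : (w : H) = 0 := by
        have := congrArg (fun T : H →L[ℂ] H => T ((w : H))) u.inv_mul
        simp only [ContinuousLinearMap.mul_apply] at this
        rw [hu] at this
        rw [h2] at this
        simpa using this.symm
      exact Subtype.ext h3
    have : IsUnit e := LinearMap.isUnit_iff_ker_eq_bot e |>.mpr hinj
    exact IsUnit.ne_zero (LinearMap.isUnit_det e this)
  · -- det ≠ 0 ⇒ unit
    intro hd
    have hUe : IsUnit e := by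
      rw [LinearMap.isUnit_iff_ker_eq_bot, LinearMap.ker_eq_bot]
      have hE : ((LinearMap.equivOfDetNeZero e hd : W ≃ₗ[ℂ] W) : W →ₗ[ℂ] W) = e :=
        LinearEquiv.coe_ofIsUnitDet _
      rw [← hE]
      exact (LinearMap.equivOfDetNeZero e hd).injective
    obtain ⟨u, hu⟩ := hUe
    set g : W →ₗ[ℂ] W := ↑u⁻¹ with hg
    have hgu : ∀ w : W, g (e w) = w := fun w => by
      have := congrArg (fun f : W →ₗ[ℂ] W => f w) u.inv_mul
      simpa [hg, hu, Module.End.mul_apply] using this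
    have hug : ∀ w : W, e (g w) = w := fun w => by
      have := congrArg (fun f : W →ₗ[ℂ] W => f w) u.mul_inv
      simpa [hg, hu, Module.End.mul_apply] using this
    set gC : W →L[ℂ] W := LinearMap.toContinuousLinearMap g with hgC
    set Nres : H →L[ℂ] W := N.codRestrict W hNW with hNres
    set Ginv : H →L[ℂ] H := 1 - W.subtypeL.comp (gC.comp Nres) with hGinv
    have hGapp : ∀ y : H, Ginv y = y - (g (Nres y) : H) := fun y => by
      simp [hGinv, hgC, ContinuousLinearMap.sub_apply, LinearMap.coe_toContinuousLinearMap']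
    refine ⟨⟨1 + N, Ginv, ?_, ?_⟩, rfl⟩
    · -- (1 + N) * Ginv = 1
      ext y
      simp only [ContinuousLinearMap.mul_apply, ContinuousLinearMap.one_apply,
        ContinuousLinearMap.add_apply]
      rw [hGapp y]
      set S : W := g (Nres y) with hS
      have hNS : N (S : H) = N y - (S : H) := by
        have h1 : (e S : H) = (S : H) + N (S : H) := heapp S
        have h2 : e S = Nres y := hug (Nres y)
        have h3 : ((Nres y : W) : H) = N y := rfl
        rw [h2, h3] at h1
        rw [eq_sub_iff_add_eq, add_comm, ← h1]
      rw [map_sub, hNS]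
      abel
    · -- Ginv * (1 + N) = 1
      ext v
      simp only [ContinuousLinearMap.mul_apply, ContinuousLinearMap.one_apply,
        ContinuousLinearMap.add_apply]
      rw [hGapp]
      have h1 : Nres (v + N v) = e (Nres v) := by
        apply Subtype.ext
        have h3 : ((Nres (v + N v) : W) : H) = N (v + N v) := rfl
        rw [h3, heapp]
        have h4 : ((Nres v : W) : H) = N v := rfl
        rw [h4, map_add]
      rw [h1, hgu]
      have h4 : ((Nres v : W) : H) = N v := rfl
      rw [h4]
      abel


lemma isUnit_mul_iff_left {M : Type*} [Monoid M] {a b : M} (ha : IsUnit a) :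
    IsUnit (a * b) ↔ IsUnit b := by
  obtain ⟨u, rfl⟩ := ha
  exact Units.isUnit_units_mul u b

lemma isUnit_mul_iff_right {M : Type*} [Monoid M] {a b : M} (hb : IsUnit b) :
    IsUnit (a * b) ↔ IsUnit a := by
  obtain ⟨u, rfl⟩ := hb
  exact Units.isUnit_mul_units a u

/-- The key local construction: near any point outside `σ(R)`, membership in `σ(R+Q)`
is the vanishing locus of a holomorphic function. -/
theorem exists_local_det (R Q : H →L[ℂ] H) (hQ : IsCompactOperator ⇑Q) {z0 : ℂ}
    (hz0 : z0 ∉ spectrum ℂ R) :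
    ∃ r > 0, ∃ d : ℂ → ℂ, DifferentiableOn ℂ d (Metric.ball z0 r) ∧
      ∀ z ∈ Metric.ball z0 r, (d z = 0 ↔ z ∈ spectrum ℂ (R + Q)) := by
  classical
  set c : ℂ → (H →L[ℂ] H) := fun z => -(Ring.inverse (z • 1 - R) * Q) with hc
  set U : Set ℂ := (spectrum ℂ R)ᶜ with hU
  have hUopen : IsOpen U := (spectrum.isClosed R).isOpen_compl
  have hz0U : z0 ∈ U := hz0
  have hunit : ∀ z ∈ U, IsUnit (z • (1 : H →L[ℂ] H) - R) := by
    intro z hz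
    rw [hU, Set.mem_compl_iff, spectrum.mem_iff, not_not, Algebra.algebraMap_eq_smul_one] at hz
    exact hz
  have hcdiff : ∀ z ∈ U, DifferentiableAt ℂ c z := by
    intro z hz
    apply DifferentiableAt.neg
    apply DifferentiableAt.mul_const
    have h1 : DifferentiableAt ℂ (fun w : ℂ => w • (1 : H →L[ℂ] H) - R) z :=
      (differentiableAt_id.smul_const _).sub_const _
    exact (differentiableAt_inverse (hunit z hz)).comp z h1
  have hccomp : IsCompactOperator ⇑(c z0) := by
    have h1 := (hQ.clm_comp (Ring.inverse (z0 • (1 : H →L[ℂ] H) - R))).neg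
    have h2 : ⇑(c z0) = -(⇑(Ring.inverse (z0 • (1 : H →L[ℂ] H) - R)) ∘ ⇑Q) := by
      funext x
      simp [hc, ContinuousLinearMap.mul_apply]
    rw [h2]
    exact h1
  obtain ⟨W, hWfin, F, hFW, hFnorm⟩ :=
    finite_rank_approx (c z0) hccomp (by norm_num : (0:ℝ) < 1/4)
  haveI := hWfin
  have hcont : ContinuousAt c z0 := (hcdiff z0 hz0U).continuousAt
  have hnb : {z : ℂ | ‖c z - c z0‖ < 1/4} ∈ nhds z0 := by
    have h2 := hcont (Metric.ball_mem_nhds (c z0) (by norm_num : (0:ℝ) < 1/4))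
    refine Filter.mem_of_superset h2 ?_
    intro z hz
    simpa [Metric.mem_ball, dist_eq_norm] using hz
  obtain ⟨r, hr, hball⟩ := Metric.mem_nhds_iff.mp (Filter.inter_mem (hUopen.mem_nhds hz0U) hnb)
  have hballU : ∀ z ∈ Metric.ball z0 r, z ∈ U := fun z hz => (hball hz).1
  have hGsmall : ∀ z ∈ Metric.ball z0 r, ‖c z - F‖ < 1 := by
    intro z hz
    have h1 : ‖c z - c z0‖ < 1/4 := (hball hz).2
    calc ‖c z - F‖ = ‖(c z - c z0) + (c z0 - F)‖ := by congr 1; abel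
      _ ≤ ‖c z - c z0‖ + ‖c z0 - F‖ := norm_add_le _ _
      _ < 1 := by linarith
  have hGu : ∀ z ∈ Metric.ball z0 r, IsUnit ((1 : H →L[ℂ] H) + (c z - F)) := by
    intro z hz
    have h1 : ‖-(c z - F)‖ < 1 := by rw [norm_neg]; exact hGsmall z hz
    have h2 : (1 : H →L[ℂ] H) + (c z - F) = 1 - (-(c z - F)) := by rw [sub_neg_eq_add]
    rw [h2]
    exact (Units.oneSub _ h1).isUnit
  set N : ℂ → (H →L[ℂ] H) := fun z => F * Ring.inverse (1 + (c z - F)) with hNdef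
  have hNW : ∀ z, ∀ x : H, N z x ∈ W := by
    intro z x
    simp only [hNdef, ContinuousLinearMap.mul_apply]
    exact hFW _
  have hNdiff : ∀ z ∈ Metric.ball z0 r, DifferentiableAt ℂ N z := by
    intro z hz
    apply DifferentiableAt.const_mul
    have h1 : DifferentiableAt ℂ (fun w : ℂ => (1 : H →L[ℂ] H) + (c w - F)) z :=
      ((hcdiff z (hballU z hz)).sub_const _).const_add _
    exact (differentiableAt_inverse (hGu z hz)).comp z h1
  set b := stdOrthonormalBasis ℂ W with hb
  set d : ℂ → ℂ := fun z => Matrix.det (Matrix.of fun i j : Fin (Module.finrank ℂ W) =>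
    (inner ℂ ((b i : W) : H) (((b j : W) : H) + N z ((b j : W) : H)) : ℂ)) with hd
  refine ⟨r, hr, d, ?_, ?_⟩
  · -- differentiability
    intro z hz
    apply DifferentiableAt.differentiableWithinAt
    have hentry : ∀ i j : Fin (Module.finrank ℂ W), DifferentiableAt ℂ
        (fun w => (inner ℂ ((b i : W) : H) (((b j : W) : H) + N w ((b j : W) : H)) : ℂ)) z := by
      intro i j
      have h1 : DifferentiableAt ℂ (fun w => N w ((b j : W) : H)) z :=
        ((ContinuousLinearMap.apply ℂ H ((b j : W) : H)).differentiableAt).comp z (hNdiff z hz)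
      have h2 : DifferentiableAt ℂ (fun w => ((b j : W) : H) + N w ((b j : W) : H)) z :=
        h1.const_add _
      exact ((innerSL ℂ ((b i : W) : H)).differentiableAt).comp z h2
    simp only [hd, Matrix.det_apply]
    apply DifferentiableAt.fun_sum
    intro σ _
    simp only [Units.smul_def, zsmul_eq_mul]
    apply DifferentiableAt.const_mul
    apply DifferentiableAt.fun_finsetProd
    intro i _
    simpa using hentry (σ i) i
  · -- characterization
    intro z hz
    have hzU := hballU z hz
    have u1 : IsUnit (z • (1 : H →L[ℂ] H) - R) := hunit z hzU
    have hfac1 : z • (1 : H →L[ℂ] H) - (R + Q) = (z • 1 - R) * (1 + c z) := by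
      rw [mul_add, mul_one, hc]
      simp only
      rw [mul_neg, ← mul_assoc, Ring.mul_inverse_cancel _ u1, one_mul, ← sub_eq_add_neg, sub_sub]
    have hfac2 : (1 : H →L[ℂ] H) + c z = (1 + N z) * (1 + (c z - F)) := by
      rw [add_mul, one_mul, hNdef]
      simp only
      rw [mul_assoc, Ring.inverse_mul_cancel _ (hGu z hz), mul_one]
      abel
    have hdet : d z = LinearMap.det
        (LinearMap.id + ((N z : H →L[ℂ] H) : H →ₗ[ℂ] H).restrict (fun x _ => hNW z x)) := by
      simp only [hd]
      rw [← LinearMap.det_toMatrix b.toBasis]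
      congr 1
      ext i j
      rw [LinearMap.toMatrix_apply, OrthonormalBasis.coe_toBasis,
        OrthonormalBasis.coe_toBasis_repr_apply, OrthonormalBasis.repr_apply_apply,
        Submodule.coe_inner]
      simp [LinearMap.restrict_coe_apply, inner_add_right]
    rw [spectrum.mem_iff, Algebra.algebraMap_eq_smul_one]
    have hchain : IsUnit (z • (1 : H →L[ℂ] H) - (R + Q)) ↔ d z ≠ 0 := by
      rw [hfac1, isUnit_mul_iff_left u1, hfac2, isUnit_mul_iff_right (hGu z hz),
        isUnit_one_add_iff_det W (N z) (hNW z), ← hdet]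
    constructor
    · intro h0 hU
      exact (hchain.mp hU) h0
    · intro hnU
      by_contra hdz
      exact hnU (hchain.mpr hdz)


/-- Eigenvalue and finite multiplicity for non-`σ(R)` spectral points. -/
theorem eigen_of_mem (R Q : H →L[ℂ] H) (hQ : IsCompactOperator ⇑Q) {z : ℂ}
    (hzR : z ∉ spectrum ℂ R) (hzA : z ∈ spectrum ℂ (R + Q)) :
    (∃ v : H, v ≠ 0 ∧ (R + Q) v = z • v) ∧
      FiniteDimensional ℂ (LinearMap.ker (((R + Q) - z • (1 : H →L[ℂ] H) : H →L[ℂ] H) : H →ₗ[ℂ] H)) := by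
  have u1 : IsUnit (z • (1 : H →L[ℂ] H) - R) := by
    rw [spectrum.mem_iff, not_not, Algebra.algebraMap_eq_smul_one] at hzR
    exact hzR
  set C : H →L[ℂ] H := -(Ring.inverse (z • 1 - R) * Q) with hC
  have hCc : IsCompactOperator ⇑C := by
    have h1 := (hQ.clm_comp (Ring.inverse (z • (1 : H →L[ℂ] H) - R))).neg
    have h2 : ⇑C = -(⇑(Ring.inverse (z • (1 : H →L[ℂ] H) - R)) ∘ ⇑Q) := by
      funext x
      simp [hC, ContinuousLinearMap.mul_apply]
    rw [h2]
    exact h1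
  have hfac : z • (1 : H →L[ℂ] H) - (R + Q) = (z • 1 - R) * (1 + C) := by
    rw [mul_add, mul_one, hC,
      mul_neg, ← mul_assoc, Ring.mul_inverse_cancel _ u1, one_mul, ← sub_eq_add_neg, sub_sub]
  have hnu : ¬IsUnit ((1 : H →L[ℂ] H) + C) := by
    intro h
    rw [spectrum.mem_iff, Algebra.algebraMap_eq_smul_one, hfac] at hzA
    exact hzA (u1.mul h)
  have hker : ∃ v : H, v ≠ 0 ∧ v + C v = 0 := by
    by_contra hno
    push_neg at hno
    exact hnu (isUnit_one_add C hCc (fun x hx => by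
      by_contra hx0
      exact (hno x hx0) hx))
  obtain ⟨v, hv0, hveq⟩ := hker
  have hkerset : ∀ x : H, ((R + Q) - z • (1 : H →L[ℂ] H)) x = 0 ↔ x + C x = 0 := by
    intro x
    have h1 : ((R + Q) - z • (1 : H →L[ℂ] H)) x = -((z • (1 : H →L[ℂ] H) - (R + Q)) x) := by
      simp only [ContinuousLinearMap.sub_apply, ContinuousLinearMap.smul_apply,
        ContinuousLinearMap.one_apply, ContinuousLinearMap.add_apply]
      abel
    rw [h1, neg_eq_zero, hfac, ContinuousLinearMap.mul_apply]
    constructor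
    · intro h
      obtain ⟨u, hu⟩ := u1
      have h3 := congrArg (fun T : H →L[ℂ] H => T ((1 + C) x)) u.inv_mul
      simp only [ContinuousLinearMap.mul_apply, ContinuousLinearMap.one_apply] at h3
      rw [hu, h] at h3
      have h4 : (1 + C) x = 0 := by simpa using h3.symm
      simpa [ContinuousLinearMap.add_apply] using h4
    · intro h
      have h2 : (1 + C) x = 0 := by simpa [ContinuousLinearMap.add_apply] using h
      rw [h2, map_zero]
  constructor
  · refine ⟨v, hv0, ?_⟩
    have h1 := (hkerset v).mpr hveq
    have h2 : (R + Q) v - z • v = 0 := by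
      simpa [ContinuousLinearMap.sub_apply, ContinuousLinearMap.smul_apply] using h1
    exact sub_eq_zero.mp h2
  · have hkereq : LinearMap.ker (((R + Q) - z • (1 : H →L[ℂ] H) : H →L[ℂ] H) : H →ₗ[ℂ] H) = LinearMap.ker ((1 + C : H →L[ℂ] H) : H →ₗ[ℂ] H) := by
      ext x
      rw [LinearMap.mem_ker, LinearMap.mem_ker]
      change ((R + Q) - z • (1 : H →L[ℂ] H)) x = 0 ↔ (1 + C) x = 0
      rw [hkerset x]
      constructor
      · intro h
        simpa [ContinuousLinearMap.add_apply] using h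
      · intro h
        simpa [ContinuousLinearMap.add_apply] using h
    rw [hkereq]
    exact findim_ker_one_add C hCc

end QuasiHermAux

/-- Spectrum of a quasihermitian operator: if `Im A = (A - A*)/(2i)` is compact, then every
accumulation point of `σ(A)` lies in `σ(Re A)`, and every non-real point of `σ(A)` is an
eigenvalue of `A` with finite-dimensional eigenspace. -/
theorem statement11
    {H : Type*} [NormedAddCommGroup H] [InnerProductSpace ℂ H] [CompleteSpace H]
    (A : H →L[ℂ] H)
    (hcpt : IsCompactOperator ⇑(((2 : ℂ) * Complex.I)⁻¹ • (A - adjoint A))) :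
    (∀ w : ℂ, AccPt w (Filter.principal (spectrum ℂ A)) →
      w ∈ spectrum ℂ ((2 : ℂ)⁻¹ • (A + adjoint A))) ∧
    (∀ z ∈ spectrum ℂ A, z.im ≠ 0 →
      (∃ v : H, v ≠ 0 ∧ A v = z • v) ∧
      FiniteDimensional ℂ (LinearMap.ker ((A - z • (1 : H →L[ℂ] H) : H →L[ℂ] H) : H →ₗ[ℂ] H))) := by
  set R : H →L[ℂ] H := (2 : ℂ)⁻¹ • (A + ContinuousLinearMap.adjoint A) with hR
  set Q : H →L[ℂ] H := A - R with hQdef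
  have hRQ : R + Q = A := by rw [hQdef]; abel
  have hRsa : IsSelfAdjoint R := by
    rw [hR, IsSelfAdjoint, star_smul, star_add, ContinuousLinearMap.star_eq_adjoint,
      ContinuousLinearMap.star_eq_adjoint, ContinuousLinearMap.adjoint_adjoint]
    simp [add_comm]
  have hQc : IsCompactOperator ⇑Q := by
    have hI : Complex.I * ((2 : ℂ) * Complex.I)⁻¹ = (2 : ℂ)⁻¹ := by
      field_simp
    have h1 : Q = Complex.I • (((2 : ℂ) * Complex.I)⁻¹ • (A - ContinuousLinearMap.adjoint A)) := by
      rw [hQdef, hR, smul_smul, hI]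
      module
    rw [h1]
    have h2 : ⇑(Complex.I • (((2 : ℂ) * Complex.I)⁻¹ • (A - ContinuousLinearMap.adjoint A))) =
        Complex.I • ⇑(((2 : ℂ) * Complex.I)⁻¹ • (A - ContinuousLinearMap.adjoint A)) := rfl
    rw [h2]
    exact hcpt.smul Complex.I
  rcases subsingleton_or_nontrivial H with hsub | hnt
  · haveI : Subsingleton (H →L[ℂ] H) := ⟨fun f g => by ext x; exact congrArg _ (Subsingleton.elim x 0) |>.trans ((map_zero f).trans (map_zero g).symm) |>.trans (congrArg _ (Subsingleton.elim 0 x))⟩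
    have hAll : spectrum ℂ A = ∅ := by
      ext x
      simp only [Set.mem_empty_iff_false, iff_false, spectrum.mem_iff, not_not]
      exact isUnit_of_subsingleton _
    constructor
    · intro w hw
      rw [hAll, Filter.principal_empty] at hw
      simp only [AccPt, inf_bot_eq] at hw
      exact absurd rfl hw.ne
    · intro z hz
      rw [hAll] at hz
      exact absurd hz (Set.notMem_empty z)
  have hstep : ∀ z : ℂ, z ∉ spectrum ℂ R →
      (∃ᶠ y in nhdsWithin z {z}ᶜ, y ∈ spectrum ℂ A) → z ∈ interior (spectrum ℂ A) := by
    intro z hzR hfreq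
    obtain ⟨r, hr, d, hdiff, hchar⟩ := QuasiHermAux.exists_local_det R Q hQc hzR
    rw [hRQ] at hchar
    have han : AnalyticAt ℂ d z :=
      (hdiff.analyticOnNhd Metric.isOpen_ball) z (Metric.mem_ball_self hr)
    have hballev : ∀ᶠ y in nhds z, y ∈ Metric.ball z r := by
      rw [Filter.eventually_iff]
      exact Metric.ball_mem_nhds z hr
    have hfreq2 : ∃ᶠ y in nhdsWithin z {z}ᶜ, d y = 0 := by
      have hball : ∀ᶠ y in nhdsWithin z {z}ᶜ, y ∈ Metric.ball z r :=
        eventually_nhdsWithin_of_eventually_nhds hballev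
      exact (hfreq.and_eventually hball).mono (fun y hy => (hchar y hy.2).mpr hy.1)
    have hev : ∀ᶠ y in nhds z, d y = 0 :=
      han.frequently_zero_iff_eventually_zero.mp hfreq2
    rw [mem_interior_iff_mem_nhds]
    have hmem : ∀ᶠ y in nhds z, y ∈ spectrum ℂ A :=
      (hev.and hballev).mono (fun y hy => (hchar y hy.2).mp hy.1)
    rwa [Filter.eventually_iff] at hmem
  constructor
  · -- part (i)
    intro w hw
    by_contra hwR
    have hwint : w ∈ interior (spectrum ℂ A) := by
      apply hstep w hwR
      rw [accPt_iff_frequently] at hw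
      rw [frequently_nhdsWithin_iff]
      exact hw.mono (fun y hy => ⟨hy.2, hy.1⟩)
    -- clopen argument on the connected set U = σ(R)ᶜ
    obtain ⟨hne, hpre⟩ := hRsa.isConnected_spectrum_compl
    set U : Set ℂ := (spectrum ℂ R)ᶜ with hU
    set u : Set ℂ := interior (spectrum ℂ A) with hu
    set v : Set ℂ := U ∩ (closure u)ᶜ with hv
    have hucl : ∀ z ∈ U, z ∈ closure u → z ∈ u := by
      intro z hzU hzcl
      apply hstep z hzU
      rw [Filter.frequently_iff]
      intro V hV
      rw [mem_nhdsWithin] at hV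
      obtain ⟨T, hTo, hzT, hTs⟩ := hV
      have hTu : (T ∩ u).Nonempty := _root_.mem_closure_iff.mp hzcl T hTo hzT
      by_cases hzin : z ∈ T ∩ u
      · have h1 : (T ∩ u) ∈ nhds z := (hTo.inter isOpen_interior).mem_nhds hzin
        have h2 : (T ∩ u) \ {z} ∈ nhdsWithin z {z}ᶜ := diff_mem_nhdsWithin_compl h1 {z}
        obtain ⟨y, ⟨⟨hyT, hyu⟩, hyz⟩⟩ := Filter.nonempty_of_mem h2
        exact ⟨y, hTs ⟨hyT, hyz⟩, interior_subset hyu⟩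
      · obtain ⟨y, hyT, hyu⟩ := hTu
        have hyz : y ∉ ({z} : Set ℂ) := fun h => hzin (by rw [Set.mem_singleton_iff] at h; rw [← h]; exact ⟨hyT, hyu⟩)
        exact ⟨y, hTs ⟨hyT, hyz⟩, interior_subset hyu⟩
    have hUuv : U ⊆ u ∪ v := by
      intro z hzU
      by_cases h : z ∈ closure u
      · exact Or.inl (hucl z hzU h)
      · exact Or.inr ⟨hzU, h⟩
    have hUu : (U ∩ u).Nonempty := ⟨w, hwR, hwint⟩
    have hUv : (U ∩ v).Nonempty := by
      set t : ℂ := ((max ‖A‖ ‖R‖ + 1 : ℝ) : ℂ) with ht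
      have htnorm : ‖t‖ = max ‖A‖ ‖R‖ + 1 := by
        rw [ht, Complex.norm_real]
        rw [Real.norm_eq_abs, abs_of_pos]
        positivity
      have htR : t ∈ U := by
        intro h
        have h2 := spectrum.norm_le_norm_of_mem h
        rw [htnorm] at h2
        nlinarith [le_max_right ‖A‖ ‖R‖]
      have htA : t ∉ spectrum ℂ A := by
        intro h
        have h2 := spectrum.norm_le_norm_of_mem h
        rw [htnorm] at h2
        nlinarith [le_max_left ‖A‖ ‖R‖]
      have htcl : t ∉ closure u := by
        intro h
        exact htA (closure_minimal interior_subset (spectrum.isClosed A) h)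
      exact ⟨t, htR, htR, htcl⟩
    have hvo : IsOpen v := ((spectrum.isClosed R).isOpen_compl).inter isClosed_closure.isOpen_compl
    obtain ⟨y, hyU, hyu, hyv⟩ := hpre u v isOpen_interior hvo hUuv hUu hUv
    exact hyv.2 (subset_closure hyu)
  · -- part (ii)
    intro z hz hzim
    have hzR : z ∉ spectrum ℂ R := fun h => hzim (hRsa.im_eq_zero_of_mem_spectrum h)
    have h2 : z ∈ spectrum ℂ (R + Q) := by rw [hRQ]; exact hz
    obtain ⟨hex, hfd⟩ := QuasiHermAux.eigen_of_mem R Q hQc hzR h2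
    rw [hRQ] at hex hfd
    exact ⟨hex, hfd⟩
end
end

section
/- Let n, r ≥ 1, let A be an n×n complex matrix, Φ an r×n complex matrix, and J an r×r complex matrix with J = J*, J² = I_r, and (1/i)(A − A*) = Φ* J Φ. Then there exist an enumeration λ1, …, λn of the eigenvalues of A counted with algebraic multiplicity and column vectors η1, …, ηn ∈ ℂ^r such that: ηk* J ηk = 2 Im λk for each k = 1, …, n; ∑_{k=1}^n ηk ηk* = Φ Φ*; 2 ∑_{k=1}^n |Im λk| ≤ tr(Φ Φ*); and for every z ∈ ℂ not an eigenvalue of A, I_r − i Φ (A − z I_n)⁻¹ Φ* J = ∏_{k=1}^n ( I_r + (i/(z − λk)) ηk ηk* J ), where the product is taken left to right in increasing order of k. -/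
noncomputable section

open Matrix Polynomial

lemma dot_col_entry {r m : ℕ} (M : Matrix (Fin r) (Fin m) ℂ) (J : Matrix (Fin r) (Fin r) ℂ)
    (k l : Fin m) :
    dotProduct (star fun p => M p k) (J.mulVec fun p => M p l)
      = (Mᴴ * J * M) k l := by
  simp only [dotProduct, Matrix.mulVec, Matrix.mul_apply, Matrix.conjTranspose_apply,
    Pi.star_apply, dotProduct, Finset.sum_mul, Finset.mul_sum]
  rw [Finset.sum_comm]
  refine Finset.sum_congr rfl fun q _ => Finset.sum_congr rfl fun p _ => by ring

lemma charpoly_conj' {n : ℕ} (U A : Matrix (Fin n) (Fin n) ℂ)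
    (h2 : Uᴴ * U = 1) :
    (Uᴴ * A * U).charpoly = A.charpoly := by
  classical
  have hmap : ∀ M N : Matrix (Fin n) (Fin n) ℂ,
      (C : ℂ →+* ℂ[X]).mapMatrix (M * N) = (C : ℂ →+* ℂ[X]).mapMatrix M * (C : ℂ →+* ℂ[X]).mapMatrix N := fun M N => by
    simp
  have hone : (C : ℂ →+* ℂ[X]).mapMatrix (Uᴴ * U) = 1 := by rw [h2]; simp
  have hc : charmatrix (Uᴴ * A * U)
      = ((C : ℂ →+* ℂ[X]).mapMatrix Uᴴ) * charmatrix A * ((C : ℂ →+* ℂ[X]).mapMatrix U) := by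
    unfold charmatrix
    rw [Matrix.mul_sub, Matrix.sub_mul]
    congr 1
    · rw [Matrix.mul_assoc, (Matrix.scalar_commute (X : ℂ[X]) (Commute.all _) _).eq,
        ← Matrix.mul_assoc, ← hmap, h2]
      simp
    · rw [hmap, hmap]
  rw [Matrix.charpoly, hc, Matrix.det_mul, Matrix.det_mul,
    mul_comm ((C : ℂ →+* ℂ[X]).mapMatrix Uᴴ).det, mul_assoc, ← Matrix.det_mul, ← hmap, hone]
  simp [Matrix.charpoly]

lemma abs_dot_J_le {r : ℕ} (J : Matrix (Fin r) (Fin r) ℂ) (hJsa : Jᴴ = J) (hJinv : J * J = 1)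
    (v : Fin r → ℂ) :
    ‖dotProduct (star v) (J.mulVec v)‖ ≤ ∑ p, Complex.normSq (v p) := by
  classical
  set x : EuclideanSpace ℂ (Fin r) := WithLp.toLp 2 v with hx
  set y : EuclideanSpace ℂ (Fin r) := WithLp.toLp 2 (J.mulVec v) with hy
  have hinner : ∀ a b : EuclideanSpace ℂ (Fin r),
      (inner ℂ a b : ℂ) = dotProduct (star (a : Fin r → ℂ)) (b : Fin r → ℂ) := by
    intro a b
    simp [PiLp.inner_apply, RCLike.inner_apply, dotProduct, mul_comm]
  have hyy : dotProduct (star (J.mulVec v)) (J.mulVec v) = dotProduct (star v) v := by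
    rw [Matrix.star_mulVec, dotProduct_mulVec, Matrix.vecMul_vecMul, hJsa, hJinv,
      Matrix.vecMul_one]
  have hny : ‖y‖ = ‖x‖ := by
    have h1 : ‖y‖ = Real.sqrt (RCLike.re (inner (𝕜 := ℂ) y y)) := norm_eq_sqrt_re_inner y
    have h2 : ‖x‖ = Real.sqrt (RCLike.re (inner (𝕜 := ℂ) x x)) := norm_eq_sqrt_re_inner x
    rw [h1, h2, hinner, hinner, hx, hy, hyy]
  have hxx : ‖x‖ * ‖x‖ = ∑ p, Complex.normSq (v p) := by
    rw [← @inner_self_eq_norm_mul_norm ℂ _ _ _ _ x, hinner]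
    have : dotProduct (star (x : Fin r → ℂ)) (x : Fin r → ℂ)
        = ∑ p, (Complex.normSq (v p) : ℂ) := by
      refine Finset.sum_congr rfl fun p _ => ?_
      simp [hx, Complex.normSq_apply, Complex.ext_iff, Complex.mul_re, Complex.mul_im]; ring
    rw [this]
    simp [Complex.re_sum]
  calc ‖dotProduct (star v) (J.mulVec v)‖ = ‖(inner ℂ x y : ℂ)‖ := by
        rw [hinner]
    _ ≤ ‖x‖ * ‖y‖ := norm_inner_le_norm x y
    _ = ∑ p, Complex.normSq (v p) := by rw [hny, hxx]

lemma trace_bound {n r : ℕ} (J : Matrix (Fin r) (Fin r) ℂ) (hJsa : Jᴴ = J) (hJinv : J * J = 1)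
    (Φ : Matrix (Fin r) (Fin n) ℂ) (lam : Fin n → ℂ) (η : Fin n → Fin r → ℂ)
    (h2 : ∀ k, dotProduct (star (η k)) (J.mulVec (η k)) = 2 * (lam k).im)
    (h3 : ∑ k, Matrix.vecMulVec (η k) (star (η k)) = Φ * Φᴴ) :
    2 * ∑ k, |(lam k).im| ≤ (Matrix.trace (Φ * Φᴴ)).re := by
  classical
  have key : ∀ k, 2 * |(lam k).im| ≤ ∑ p, Complex.normSq (η k p) := by
    intro k
    have h := abs_dot_J_le J hJsa hJinv (η k)
    rw [h2 k] at h
    refine le_trans (le_of_eq ?_) h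
    rw [norm_mul, Complex.norm_real, Complex.norm_two, Real.norm_eq_abs]
  have htr : (Matrix.trace (Φ * Φᴴ)).re = ∑ k, ∑ p, Complex.normSq (η k p) := by
    rw [← h3]
    simp only [Matrix.trace, Matrix.diag, Matrix.sum_apply, Matrix.vecMulVec_apply,
      Pi.star_apply]
    rw [Complex.re_sum, Finset.sum_comm]
    refine Finset.sum_congr rfl fun k _ => ?_
    rw [Complex.re_sum]
    refine Finset.sum_congr rfl fun p _ => ?_
    simp [mul_comm, Complex.normSq_apply, Complex.mul_re]
  rw [htr, Finset.mul_sum]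
  exact Finset.sum_le_sum fun k _ => key k

lemma exists_unitary_eig {n : ℕ} (A : Matrix (Fin (n+1)) (Fin (n+1)) ℂ) :
    ∃ (U : Matrix (Fin (n+1)) (Fin (n+1)) ℂ) (μ : ℂ),
      U * Uᴴ = 1 ∧ Uᴴ * U = 1 ∧ (∀ i, (Uᴴ * A * U) i 0 = if i = 0 then μ else 0) := by
  classical
  -- eigenvalue and eigenvector
  obtain ⟨μ, hμ⟩ := Module.End.exists_eigenvalue (Matrix.mulVecLin A)
  obtain ⟨v, hv⟩ := hμ.exists_hasEigenvector
  set v' : EuclideanSpace ℂ (Fin (n+1)) := WithLp.toLp 2 v with hv'_def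
  have hv0 : v' ≠ 0 := fun h => hv.right (by simpa [hv'_def] using congrArg WithLp.ofLp h)
  have hAv : A.mulVec v = μ • v := by
    have := hv.apply_eq_smul
    simpa [Matrix.mulVecLin_apply] using this
  set u : EuclideanSpace ℂ (Fin (n+1)) := ((‖v'‖ : ℂ))⁻¹ • v' with hu_def
  have hu_norm : ‖u‖ = 1 := norm_smul_inv_norm hv0
  have hAu : A.mulVec u = μ • (u : Fin (n+1) → ℂ) := by
    show A.mulVec (((‖v'‖ : ℂ))⁻¹ • (v : Fin (n+1) → ℂ)) = _
    rw [Matrix.mulVec_smul, hAv, smul_comm]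
    rfl
  -- orthonormal basis with first vector u
  have hcard : Module.finrank ℂ (EuclideanSpace ℂ (Fin (n+1))) = Fintype.card (Fin (n+1)) := by
    simp [finrank_euclideanSpace]
  have horth : Orthonormal ℂ (({0} : Set (Fin (n+1))).restrict (fun _ => u)) := by
    constructor
    · intro i; exact hu_norm
    · intro i j hij
      exact absurd (Subtype.ext ((i.2 : (i : Fin (n+1)) ∈ ({0} : Set (Fin (n+1)))).trans
        ((j.2 : (j : Fin (n+1)) ∈ ({0} : Set (Fin (n+1)))).symm))) hij
  obtain ⟨b, hb⟩ := horth.exists_orthonormalBasis_extension_of_card_eq hcard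
  have hb0 : b 0 = u := hb 0 rfl
  set U : Matrix (Fin (n+1)) (Fin (n+1)) ℂ := Matrix.of fun i j => (b j : EuclideanSpace ℂ (Fin (n+1))) i with hU_def
  have hinner : ∀ i j : Fin (n+1), (∑ p, (starRingEnd ℂ) ((b i : EuclideanSpace ℂ (Fin (n+1))) p) * (b j : EuclideanSpace ℂ (Fin (n+1))) p) = if i = j then 1 else 0 := by
    intro i j
    have := (orthonormal_iff_ite (𝕜 := ℂ)).mp b.orthonormal i j
    rw [← this]
    simp [PiLp.inner_apply, RCLike.inner_apply, mul_comm]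
  have hUtU : Uᴴ * U = 1 := by
    ext i j
    simp only [Matrix.mul_apply, Matrix.conjTranspose_apply, hU_def, Matrix.of_apply,
      Matrix.one_apply, Complex.star_def]
    rw [hinner i j]
  have hUUt : U * Uᴴ = 1 := mul_eq_one_comm.mp hUtU
  refine ⟨U, μ, hUUt, hUtU, ?_⟩
  intro i
  have hAU : ∀ q, (A * U) q 0 = μ * u q := by
    intro q
    have hq := congrFun hAu q
    simp only [Matrix.mulVec, dotProduct, Pi.smul_apply, smul_eq_mul] at hq
    simp only [Matrix.mul_apply, hU_def, Matrix.of_apply, hb0]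
    exact hq
  rw [Matrix.mul_assoc]
  simp only [Matrix.mul_apply, Matrix.conjTranspose_apply, hU_def, Matrix.of_apply, Complex.star_def]
  calc (∑ q, (starRingEnd ℂ) ((b i : EuclideanSpace ℂ (Fin (n+1))) q) * (A * U) q 0)
      = μ * ∑ q, (starRingEnd ℂ) ((b i : EuclideanSpace ℂ (Fin (n+1))) q) * (b 0 : EuclideanSpace ℂ (Fin (n+1))) q := by
        rw [Finset.mul_sum]
        refine Finset.sum_congr rfl fun q _ => ?_
        rw [hAU q, hb0]; ring
    _ = if i = 0 then μ else 0 := by rw [hinner i 0]; split <;> simp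

lemma key {r : ℕ} (J : Matrix (Fin r) (Fin r) ℂ)
    (hJsa : Jᴴ = J) (hJinv : J * J = 1) :
    ∀ (n : ℕ) (A : Matrix (Fin n) (Fin n) ℂ) (Φ : Matrix (Fin r) (Fin n) ℂ),
      Complex.I⁻¹ • (A - Aᴴ) = Φᴴ * J * Φ →
      ∃ (lam : Fin n → ℂ) (η : Fin n → Fin r → ℂ),
        (A.charpoly = ∏ k : Fin n, (X - C (lam k))) ∧
        (∀ k, dotProduct (star (η k)) (J.mulVec (η k)) = 2 * (lam k).im) ∧
        (∑ k, Matrix.vecMulVec (η k) (star (η k)) = Φ * Φᴴ) ∧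
        (∀ z : ℂ, (A - z • 1).det ≠ 0 →
          (1 : Matrix (Fin r) (Fin r) ℂ) - Complex.I • (Φ * (A - z • 1)⁻¹ * Φᴴ * J) =
            (List.ofFn fun k => (1 : Matrix (Fin r) (Fin r) ℂ) +
              (Complex.I / (z - lam k)) • (Matrix.vecMulVec (η k) (star (η k)) * J)).prod) := by
  intro n
  induction n with
  | zero =>
    intro A Φ _
    refine ⟨Fin.elim0, Fin.elim0, ?_, fun k => k.elim0, ?_, ?_⟩
    · simp [Matrix.charpoly, Matrix.det_fin_zero]
    · ext p q; simp [Matrix.mul_apply]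
    · intro z _
      have hΦ : Φ * (A - z • 1)⁻¹ * Φᴴ * J = 0 := by
        ext p q; simp [Matrix.mul_apply]
      rw [hΦ]
      simp
  | succ n IH =>
    intro A Φ hcol
    obtain ⟨U, μ, hUUt, hUtU, hB0⟩ := exists_unitary_eig A
    set B := Uᴴ * A * U with hB_def
    set Φ' := Φ * U with hΦ'_def
    have hB00 : B 0 0 = μ := by simpa using hB0 0
    have hBs0 : ∀ i : Fin n, B i.succ 0 = 0 := fun i => by
      simpa [Fin.succ_ne_zero] using hB0 i.succ
    have hcolB : Complex.I⁻¹ • (B - Bᴴ) = Φ'ᴴ * J * Φ' := by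
      have h1 : B - Bᴴ = Uᴴ * (A - Aᴴ) * U := by
        rw [hB_def]
        simp [Matrix.conjTranspose_mul, Matrix.mul_sub, Matrix.sub_mul, Matrix.mul_assoc]
      rw [h1, ← Matrix.smul_mul, ← Matrix.mul_smul, hcol, hΦ'_def, Matrix.conjTranspose_mul]
      simp [Matrix.mul_assoc]
    set A' : Matrix (Fin n) (Fin n) ℂ := Matrix.of (fun i j => B i.succ j.succ) with hA'_def
    set c : Fin n → ℂ := fun j => B 0 j.succ with hc_def
    set η₀ : Fin r → ℂ := fun p => Φ' p 0 with hη₀_def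
    set Ψ' : Matrix (Fin r) (Fin n) ℂ := Matrix.of (fun p j => Φ' p j.succ) with hΨ'_def
    have hcol' : Complex.I⁻¹ • (A' - A'ᴴ) = Ψ'ᴴ * J * Ψ' := by
      ext i j
      have h := congrFun (congrFun hcolB i.succ) j.succ
      simp only [Matrix.smul_apply, Matrix.sub_apply, Matrix.conjTranspose_apply,
        Matrix.mul_apply, smul_eq_mul, hA'_def, hΨ'_def, Matrix.of_apply] at h ⊢
      exact h
    obtain ⟨lam', η', hch', h2', h3', h5'⟩ := IH A' Ψ' hcol'
    refine ⟨Fin.cons μ lam', Fin.cons η₀ η', ?_, ?_, ?_, ?_⟩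
    · have hBA : A.charpoly = B.charpoly := (charpoly_conj' U A hUtU).symm
      have hsub : (charmatrix B).submatrix Fin.succ Fin.succ = charmatrix A' := by
        ext i j
        simp only [Matrix.submatrix_apply, charmatrix_apply, Matrix.diagonal_apply, hA'_def,
          Matrix.of_apply, Fin.succ_inj]
      have hchB : B.charpoly = (X - C μ) * A'.charpoly := by
        rw [Matrix.charpoly, Matrix.det_succ_column_zero, Finset.sum_eq_single 0]
        · rw [charmatrix_apply_eq, hB00, Fin.succAbove_zero, hsub]
          simp [Matrix.charpoly]
        · intro i _ hi
          rw [charmatrix_apply_ne _ _ _ hi, hB0 i, if_neg hi]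
          simp
        · simp
      rw [hBA, hchB, Fin.prod_univ_succ, Fin.cons_zero, hch']
      simp [Fin.cons_succ]
    · intro k
      refine Fin.cases ?_ (fun j => ?_) k
      · simp only [Fin.cons_zero]
        have h := congrFun (congrFun hcolB 0) 0
        have hd := dot_col_entry Φ' J 0 0
        rw [hη₀_def, hd, ← h]
        simp only [Matrix.smul_apply, Matrix.sub_apply, Matrix.conjTranspose_apply, hB00,
          smul_eq_mul, Complex.star_def]
        rw [Complex.sub_conj, Complex.inv_I]
        push_cast
        ring_nf
        simp [Complex.I_sq]
      · simp only [Fin.cons_succ]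
        exact h2' j
    · have hΦΦ : Φ' * Φ'ᴴ = Φ * Φᴴ := by
        rw [hΦ'_def, Matrix.conjTranspose_mul, Matrix.mul_assoc, ← Matrix.mul_assoc U, hUUt,
          Matrix.one_mul]
      rw [Fin.sum_univ_succ]
      simp only [Fin.cons_zero, Fin.cons_succ]
      rw [h3', ← hΦΦ]
      ext p q
      simp only [Matrix.add_apply, Matrix.vecMulVec_apply, Matrix.mul_apply,
        Matrix.conjTranspose_apply, Pi.star_apply, hΨ'_def, Matrix.of_apply, hη₀_def]
      rw [Fin.sum_univ_succ]
    · intro z hz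
      have hUBU : U * B * Uᴴ = A := by
        simp only [hB_def, ← Matrix.mul_assoc]
        rw [hUUt, Matrix.one_mul, Matrix.mul_assoc, hUUt, Matrix.mul_one]
      have hABz : A - z • 1 = U * (B - z • 1) * Uᴴ := by
        rw [Matrix.mul_sub, Matrix.sub_mul, hUBU]
        congr 1
        rw [Matrix.mul_smul, Matrix.smul_mul, Matrix.mul_one, hUUt]
      have hdetB : (B - z • 1).det ≠ 0 := by
        intro h
        apply hz
        rw [hABz, Matrix.det_mul, Matrix.det_mul, h, mul_zero, zero_mul]
      have h00 : (B - z • 1) 0 0 = μ - z := by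
        simp [Matrix.sub_apply, Matrix.smul_apply, Matrix.one_apply, hB00]
      have hsubB : ∀ i j : Fin n, (B - z • 1) i.succ j.succ = (A' - z • 1) i j := by
        intro i j
        simp [hA'_def, Matrix.sub_apply, Matrix.smul_apply, Matrix.one_apply, Fin.succ_inj]
      have h0s : ∀ k : Fin n, (B - z • 1) 0 k.succ = c k := by
        intro k
        simp [Matrix.sub_apply, Matrix.smul_apply, Matrix.one_apply, (Fin.succ_ne_zero k).symm,
          hc_def]
      have hs0 : ∀ i : Fin n, (B - z • 1) i.succ 0 = 0 := by
        intro i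
        simp [Matrix.sub_apply, Matrix.smul_apply, Matrix.one_apply, Fin.succ_ne_zero, hBs0 i]
      have hdet_split : (B - z • 1).det = (μ - z) * (A' - z • 1).det := by
        rw [Matrix.det_succ_column_zero, Finset.sum_eq_single 0]
        · have hsm : (B - z • 1).submatrix (0 : Fin (n+1)).succAbove Fin.succ = A' - z • 1 := by
            rw [Fin.succAbove_zero]
            ext i j
            exact hsubB i j
          rw [h00, hsm]
          simp
        · intro i _ hi
          have hzero : (B - z • 1) i 0 = 0 := by
            simp [Matrix.sub_apply, Matrix.smul_apply, Matrix.one_apply, hB0 i, hi]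
          rw [hzero, mul_zero, zero_mul]
        · simp
      obtain ⟨hμz, hdetA'⟩ : (μ - z) ≠ 0 ∧ (A' - z • 1).det ≠ 0 := by
        rw [hdet_split] at hdetB
        exact mul_ne_zero_iff.mp hdetB
      set w : ℂ := (μ - z)⁻¹ with hw_def
      set Cm : Matrix (Fin n) (Fin n) ℂ := (A' - z • 1)⁻¹ with hCm_def
      have hCmr : (A' - z • 1) * Cm = 1 := Matrix.mul_nonsing_inv _ (Ne.isUnit hdetA')
      set d : Fin n → ℂ := Matrix.vecMul c Cm with hd_def
      set G : Matrix (Fin (n+1)) (Fin (n+1)) ℂ :=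
        Matrix.of (fun i j => Fin.cases (motive := fun _ => ℂ)
          (Fin.cons (α := fun _ => ℂ) w (fun j' => -(w * d j')) j)
          (fun i' => Fin.cons (α := fun _ => ℂ) (0 : ℂ) (fun j' => Cm i' j') j) i) with hG_def
      have hG00 : G 0 0 = w := by simp [hG_def]
      have hG0s : ∀ j : Fin n, G 0 j.succ = -(w * d j) := by intro j; simp [hG_def]
      have hGs0 : ∀ i : Fin n, G i.succ 0 = 0 := by intro i; simp [hG_def]
      have hGss : ∀ i j : Fin n, G i.succ j.succ = Cm i j := by intro i j; simp [hG_def]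
      have hd_sum : ∀ j, ∑ k, c k * Cm k j = d j := by
        intro j
        rw [hd_def]
        simp [Matrix.vecMul, dotProduct]
      have hBzG : (B - z • 1) * G = 1 := by
        ext i j
        rw [Matrix.mul_apply, Fin.sum_univ_succ]
        refine Fin.cases ?_ (fun i' => ?_) i <;> refine Fin.cases ?_ (fun j' => ?_) j
        · simp [hG00, hGs0, h00, Matrix.one_apply, hw_def, mul_inv_cancel₀ hμz]
        · rw [h00, hG0s]
          simp only [hGss, h0s]
          rw [hd_sum j']
          have hcl : (μ - z) * -(w * d j') = -(d j') := by
            rw [hw_def]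
            field_simp
          rw [hcl, neg_add_cancel]
          simp [Matrix.one_apply, (Fin.succ_ne_zero j').symm]
        · simp [hGs0, hs0 i', Matrix.one_apply, Fin.succ_ne_zero]
        · rw [hs0 i', zero_mul, zero_add]
          have hm := congrFun (congrFun hCmr i') j'
          rw [Matrix.mul_apply] at hm
          simp only [hGss, hsubB]
          rw [hm]
          simp [Matrix.one_apply, Fin.succ_inj]
      have hAinv : (A - z • 1)⁻¹ = U * G * Uᴴ := by
        apply Matrix.inv_eq_right_inv
        rw [hABz]
        simp only [Matrix.mul_assoc]
        rw [← Matrix.mul_assoc Uᴴ U, hUtU, Matrix.one_mul, ← Matrix.mul_assoc (B - z • 1) G,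
          hBzG, Matrix.one_mul, hUUt]
      have hΦinv : Φ * (A - z • 1)⁻¹ * Φᴴ = Φ' * G * Φ'ᴴ := by
        rw [hAinv, hΦ'_def, Matrix.conjTranspose_mul]
        simp only [Matrix.mul_assoc]
      set E := Matrix.vecMulVec η₀ (star η₀) with hE_def
      set S := Ψ' * Cm * Ψ'ᴴ with hS_def
      set R := Matrix.vecMulVec η₀ (Matrix.vecMul d Ψ'ᴴ) with hR_def
      have hrow : Matrix.vecMul (star η₀) (J * Ψ') = (-Complex.I) • c := by
        funext j
        have h := congrFun (congrFun hcolB 0) j.succ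
        simp only [Matrix.smul_apply, Matrix.sub_apply, Matrix.conjTranspose_apply,
          smul_eq_mul, hBs0 j] at h
        have hv : Matrix.vecMul (star η₀) (J * Ψ') j = (Φ'ᴴ * J * Φ') 0 j.succ := by
          simp only [Matrix.vecMul, dotProduct, Matrix.mul_apply,
            Matrix.conjTranspose_apply, Pi.star_apply, hΨ'_def, Matrix.of_apply, hη₀_def,
            Finset.sum_mul, Finset.mul_sum]
          rw [Finset.sum_comm]
          exact Finset.sum_congr rfl fun q _ => Finset.sum_congr rfl fun p _ => by ring
        rw [hv, ← h]
        simp only [Pi.smul_apply, smul_eq_mul, hc_def, Complex.inv_I, star_zero, sub_zero]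
      have hvec : Matrix.vecMul (star η₀) (J * (Ψ' * (Cm * Ψ'ᴴ)))
          = (-Complex.I) • Matrix.vecMul d Ψ'ᴴ := by
        rw [show J * (Ψ' * (Cm * Ψ'ᴴ)) = ((J * Ψ') * Cm) * Ψ'ᴴ by simp only [Matrix.mul_assoc],
          ← Matrix.vecMul_vecMul, ← Matrix.vecMul_vecMul, hrow, Matrix.smul_vecMul, hd_def,
          Matrix.smul_vecMul]
      have hEJS : E * J * S = (-Complex.I) • R := by
        rw [hE_def, hS_def, hR_def, Matrix.vecMulVec_eq Unit, Matrix.vecMulVec_eq Unit]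
        simp only [Matrix.mul_assoc]
        rw [← Matrix.replicateRow_vecMul, hvec, Matrix.replicateRow_smul, Matrix.mul_smul]
      have hkey : Φ' * G * Φ'ᴴ = w • E - w • R + S := by
        ext p q
        have hPG0 : (Φ' * G) p 0 = η₀ p * w := by
          rw [Matrix.mul_apply, Fin.sum_univ_succ]
          simp [hG00, hGs0, hη₀_def]
        have hPGs : ∀ j, (Φ' * G) p j.succ = -(η₀ p * (w * d j)) + (Ψ' * Cm) p j := by
          intro j
          rw [Matrix.mul_apply, Fin.sum_univ_succ, hG0s]
          have : (Ψ' * Cm) p j = ∑ i, Φ' p i.succ * Cm i j := by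
            simp [Matrix.mul_apply, hΨ'_def]
          rw [this]
          simp only [hGss, hη₀_def]
          ring
        have hSpq : S p q = ∑ j, (Ψ' * Cm) p j * star (Φ' q j.succ) := by
          rw [hS_def, Matrix.mul_apply]
          simp [Matrix.conjTranspose_apply, hΨ'_def]
        have hvMq : Matrix.vecMul d Ψ'ᴴ q = ∑ j, d j * star (Φ' q j.succ) := by
          simp [Matrix.vecMul, dotProduct, Matrix.conjTranspose_apply, hΨ'_def]
        rw [Matrix.mul_apply, Fin.sum_univ_succ]
        simp only [Matrix.conjTranspose_apply, hPG0, hPGs, Matrix.add_apply, Matrix.sub_apply,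
          Matrix.smul_apply, hE_def, hR_def, Matrix.vecMulVec_apply, Pi.star_apply, smul_eq_mul,
          add_mul, neg_mul, Finset.sum_add_distrib, Finset.sum_neg_distrib]
        rw [hSpq, hvMq, hη₀_def]
        have hsum : ∑ j, Φ' p 0 * (w * d j) * star (Φ' q j.succ)
            = w * (Φ' p 0 * ∑ j, d j * star (Φ' q j.succ)) := by
          rw [Finset.mul_sum, Finset.mul_sum]
          exact Finset.sum_congr rfl fun j _ => by ring
        rw [hsum]
        ring
      rw [List.ofFn_succ, List.prod_cons]
      simp only [Fin.cons_zero, Fin.cons_succ]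
      rw [← h5' z hdetA', hΦinv, hkey, ← hE_def]
      have hIdiv : Complex.I / (z - μ) = -(Complex.I * w) := by
        rw [hw_def, div_eq_mul_inv, show z - μ = -(μ - z) by ring, inv_neg, mul_neg]
      rw [hIdiv]
      have hscal : E * (J * (S * J)) = (-Complex.I) • (R * J) := by
        rw [show E * (J * (S * J)) = (E * J * S) * J by simp only [Matrix.mul_assoc], hEJS,
          Matrix.smul_mul]
      have habI : ((-(Complex.I * w)) • (E * J)) * (Complex.I • (S * J))
          = (-(Complex.I * w)) • (R * J) := by
        rw [Matrix.smul_mul, Matrix.mul_smul, Matrix.mul_assoc, hscal, smul_smul, smul_smul]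
        congr 1
        have h3 : Complex.I ^ 3 = -Complex.I := by
          rw [pow_succ, Complex.I_sq]
          ring
        ring_nf
        rw [h3]
        ring
      have hL : (w • E - w • R + S) * J = w • (E * J) - w • (R * J) + S * J := by
        rw [Matrix.add_mul, Matrix.sub_mul, Matrix.smul_mul, Matrix.smul_mul]
      rw [hL, add_mul, one_mul, mul_sub, mul_one, habI]
      module

/-- Multiplicative (Blaschke–Potapov) representation of the characteristic function of a matrix
colligation: for an `n×n` matrix `A` embedded in a colligation with external space `ℂ^r`, there
is an enumeration `λ₁, …, λₙ` of the eigenvalues of `A` (with algebraic multiplicity, i.e. the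
characteristic polynomial factors accordingly) and vectors `η₁, …, ηₙ ∈ ℂ^r` with
`ηₖ* J ηₖ = 2 Im λₖ`, `∑ ηₖ ηₖ* = Φ Φ*`, `2 ∑ |Im λₖ| ≤ tr (Φ Φ*)`, and the characteristic
function factorizes into elementary Blaschke–Potapov factors. -/
theorem statement12
    (n r : ℕ) (hn : 1 ≤ n) (hr : 1 ≤ r)
    (A : Matrix (Fin n) (Fin n) ℂ) (Φ : Matrix (Fin r) (Fin n) ℂ)
    (J : Matrix (Fin r) (Fin r) ℂ)
    (hJsa : J.conjTranspose = J) (hJinv : J * J = 1)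
    (hcol : Complex.I⁻¹ • (A - A.conjTranspose) = Φ.conjTranspose * J * Φ) :
    ∃ (lam : Fin n → ℂ) (η : Fin n → Fin r → ℂ),
      (A.charpoly = ∏ k : Fin n, (Polynomial.X - Polynomial.C (lam k))) ∧
      (∀ k : Fin n, dotProduct (star (η k)) (J.mulVec (η k)) = 2 * (lam k).im) ∧
      (∑ k : Fin n, Matrix.vecMulVec (η k) (star (η k)) = Φ * Φ.conjTranspose) ∧
      (2 * ∑ k : Fin n, |(lam k).im| ≤ (Matrix.trace (Φ * Φ.conjTranspose)).re) ∧
      (∀ z : ℂ, (A - z • (1 : Matrix (Fin n) (Fin n) ℂ)).det ≠ 0 →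
        (1 : Matrix (Fin r) (Fin r) ℂ) -
            Complex.I • (Φ * (A - z • (1 : Matrix (Fin n) (Fin n) ℂ))⁻¹ * Φ.conjTranspose * J) =
          (List.ofFn fun k : Fin n =>
            (1 : Matrix (Fin r) (Fin r) ℂ) +
              (Complex.I / (z - lam k)) • (Matrix.vecMulVec (η k) (star (η k)) * J)).prod) := by
  obtain ⟨lam, η, h1, h2, h3, h5⟩ := key J hJsa hJinv n A Φ hcol
  exact ⟨lam, η, h1, h2, h3, trace_bound J hJsa hJinv Φ lam η h2 h3, h5⟩
end
end

section
/- Let 𝒜 be a complex unital Banach algebra with ‖1‖ = 1, and let (H_j)_{j≥1} be a sequence in 𝒜 with ∑_{j=1}^∞ ‖H_j‖ < ∞. Then the sequence of partial products C_n = exp(H1) exp(H2) ⋯ exp(Hn) converges in norm to some C ∈ 𝒜, the sequence of reversed partial products D_n = exp(−Hn) ⋯ exp(−H2) exp(−H1) converges in norm to some D ∈ 𝒜, and C D = D C = 1, so C is invertible with C⁻¹ = D. -/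
noncomputable section

open NormedSpace Filter Nat

section Aux

variable {𝒜 : Type*} [NormedRing 𝒜] [NormedAlgebra ℂ 𝒜] [CompleteSpace 𝒜] [NormOneClass 𝒜]

lemma aux_norm_exp_le (x : 𝒜) : ‖exp x‖ ≤ Real.exp ‖x‖ := by
  have h1 : exp x = ∑' n : ℕ, (n !⁻¹ : ℂ) • x ^ n := by rw [exp_eq_tsum ℂ]
  have h2 : Real.exp ‖x‖ = ∑' n : ℕ, ‖x‖ ^ n / n ! := by
    rw [Real.exp_eq_exp_ℝ, exp_eq_tsum_div]
  rw [h1, h2]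
  refine (norm_tsum_le_tsum_norm (norm_expSeries_summable' x)).trans ?_
  refine Summable.tsum_le_tsum (fun n => ?_) (norm_expSeries_summable' x)
    (Real.summable_pow_div_factorial ‖x‖)
  rw [norm_smul]
  calc ‖(n !⁻¹ : ℂ)‖ * ‖x ^ n‖ ≤ (n ! : ℝ)⁻¹ * ‖x‖ ^ n := by
        apply mul_le_mul _ (norm_pow_le x n) (norm_nonneg _) (by positivity)
        simp [norm_inv]
    _ = ‖x‖ ^ n / n ! := by rw [div_eq_inv_mul]

lemma aux_norm_exp_sub_one_le (x : 𝒜) : ‖exp x - 1‖ ≤ ‖x‖ * Real.exp ‖x‖ := by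
  have hs : HasSum (fun n : ℕ => (n !⁻¹ : ℂ) • x ^ n) (exp x) :=
    expSeries_hasSum_exp_of_mem_ball' x
      ((NormedSpace.expSeries_radius_eq_top ℂ 𝒜).symm ▸ edist_lt_top _ _)
  have hs1 : HasSum (fun n : ℕ => ((n + 1)!⁻¹ : ℂ) • x ^ (n + 1)) (exp x - 1) := by
    have := (hasSum_nat_add_iff' 1).mpr hs
    simpa using this
  have hnorm : ∀ n : ℕ, ‖((n + 1)!⁻¹ : ℂ) • x ^ (n + 1)‖ ≤ ‖x‖ * (‖x‖ ^ n / n !) := by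
    intro n
    rw [norm_smul]
    have h1 : ‖(((n + 1)! : ℂ))⁻¹‖ ≤ ((n !) : ℝ)⁻¹ := by
      rw [norm_inv, Complex.norm_natCast]
      apply inv_anti₀ (by positivity)
      exact_mod_cast Nat.factorial_le (Nat.le_succ n)
    calc ‖(((n + 1)! : ℂ))⁻¹‖ * ‖x ^ (n + 1)‖
        ≤ ((n !) : ℝ)⁻¹ * (‖x‖ ^ (n + 1)) :=
          mul_le_mul h1 (norm_pow_le' x (Nat.succ_pos n)) (norm_nonneg _) (by positivity)
      _ = ‖x‖ * (‖x‖ ^ n / n !) := by ring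
  have hsum2 : Summable fun n : ℕ => ‖x‖ * (‖x‖ ^ n / n !) :=
    (Real.summable_pow_div_factorial ‖x‖).mul_left _
  calc ‖exp x - 1‖ ≤ ∑' n : ℕ, ‖((n + 1)!⁻¹ : ℂ) • x ^ (n + 1)‖ := by
        refine norm_tsum_le_tsum_norm ?_ |>.trans_eq' (by rw [hs1.tsum_eq])
        exact (Summable.of_nonneg_of_le (fun n => norm_nonneg _) hnorm hsum2)
    _ ≤ ∑' n : ℕ, ‖x‖ * (‖x‖ ^ n / n !) :=
        Summable.tsum_le_tsum hnorm (Summable.of_nonneg_of_le (fun n => norm_nonneg _) hnorm hsum2) hsum2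
    _ = ‖x‖ * ∑' n : ℕ, ‖x‖ ^ n / n ! := tsum_mul_left
    _ = ‖x‖ * Real.exp ‖x‖ := by rw [Real.exp_eq_exp_ℝ, exp_eq_tsum_div]

lemma aux_prod_norm_le (g : ℕ → 𝒜) (h : ℕ → 𝒜) (hg : ∀ i, ‖g i‖ = ‖h i‖)
    (hsum : Summable fun j => ‖h j‖) (n : ℕ) :
    ((List.ofFn fun i : Fin n => exp (g i)).map norm).prod ≤ Real.exp (∑' j, ‖h j‖) := by
  have : ((List.ofFn fun i : Fin n => exp (g i)).map norm).prod
      = ∏ i : Fin n, ‖exp (g i)‖ := by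
    rw [List.map_ofFn, List.prod_ofFn]
    rfl
  rw [this]
  calc ∏ i : Fin n, ‖exp (g i)‖ ≤ ∏ i : Fin n, Real.exp ‖g i‖ :=
        Finset.prod_le_prod (fun i _ => norm_nonneg _) (fun i _ => aux_norm_exp_le _)
    _ = Real.exp (∑ i : Fin n, ‖g i‖) := by rw [Real.exp_sum]
    _ ≤ Real.exp (∑' j, ‖h j‖) := by
        apply Real.exp_le_exp.mpr
        simp_rw [hg]
        rw [← Finset.sum_range fun i => ‖h i‖]
        exact Summable.sum_le_tsum _ (fun i _ => norm_nonneg _) hsum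

end Aux

/-- Convergence of infinite products of exponentials: if `∑ ‖Hⱼ‖ < ∞` in a unital Banach
algebra, the partial products `Cₙ = exp H₀ ⋯ exp Hₙ₋₁` converge to some `C`, the reversed
partial products `Dₙ = exp (-Hₙ₋₁) ⋯ exp (-H₀)` converge to some `D`, and `C D = D C = 1`. -/
theorem statement14
    {𝒜 : Type*} [NormedRing 𝒜] [NormedAlgebra ℂ 𝒜] [CompleteSpace 𝒜] [NormOneClass 𝒜]
    (H : ℕ → 𝒜) (hsum : Summable fun j => ‖H j‖) :
    ∃ C D : 𝒜,
      Filter.Tendsto (fun n : ℕ => (List.ofFn fun i : Fin n => (NormedSpace.expSeries ℂ 𝒜).sum (H i)).prod)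
        Filter.atTop (nhds C) ∧
      Filter.Tendsto
        (fun n : ℕ => ((List.ofFn fun i : Fin n => (NormedSpace.expSeries ℂ 𝒜).sum (-H i)).reverse).prod)
        Filter.atTop (nhds D) ∧
      C * D = 1 ∧ D * C = 1 := by
  rw [← exp_eq_expSeries_sum ℂ]
  set S := ∑' j, ‖H j‖ with hS
  set Cseq : ℕ → 𝒜 := fun n => (List.ofFn fun i : Fin n => exp (H i)).prod with hCseq
  set Dseq : ℕ → 𝒜 :=
    fun n => ((List.ofFn fun i : Fin n => exp (-H i)).reverse).prod with hDseq
  have hCrec : ∀ n, Cseq (n + 1) = Cseq n * exp (H n) := by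
    intro n
    simp only [hCseq, List.ofFn_succ', List.concat_eq_append, List.prod_append,
      List.prod_cons, List.prod_nil, Fin.coe_castSucc, Fin.val_last, mul_one]
  have hDrec : ∀ n, Dseq (n + 1) = exp (-H n) * Dseq n := by
    intro n
    simp only [hDseq, List.ofFn_succ', List.concat_eq_append, List.reverse_append,
      List.reverse_cons, List.reverse_nil, List.nil_append, List.cons_append,
      List.prod_cons, Fin.coe_castSucc, Fin.val_last]
  have hexpinv : ∀ n, exp (H n) * exp (-H n) = 1 := by
    intro n
    rw [← exp_add_of_commute_of_mem_ball (𝕂 := ℂ) (Commute.refl (H n)).neg_right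
      ((expSeries_radius_eq_top ℂ 𝒜).symm ▸ edist_lt_top _ _) ((expSeries_radius_eq_top ℂ 𝒜).symm ▸ edist_lt_top _ _), add_neg_cancel, exp_zero]
  have hexpinv' : ∀ n, exp (-H n) * exp (H n) = 1 := by
    intro n
    rw [← exp_add_of_commute_of_mem_ball (𝕂 := ℂ) (Commute.refl (H n)).neg_left
      ((expSeries_radius_eq_top ℂ 𝒜).symm ▸ edist_lt_top _ _) ((expSeries_radius_eq_top ℂ 𝒜).symm ▸ edist_lt_top _ _), neg_add_cancel, exp_zero]
  -- norm bounds
  have hCbd : ∀ n, ‖Cseq n‖ ≤ Real.exp S := fun n =>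
    (List.norm_prod_le _).trans (aux_prod_norm_le H H (fun _ => rfl) hsum n)
  have hDbd : ∀ n, ‖Dseq n‖ ≤ Real.exp S := by
    intro n
    have h2 := aux_prod_norm_le (fun i => -H i) H (fun i => norm_neg _) hsum n
    calc ‖Dseq n‖ ≤ (((List.ofFn fun i : Fin n => exp (-H i)).reverse).map norm).prod :=
          List.norm_prod_le _
      _ = (((List.ofFn fun i : Fin n => exp (-H i)).map norm).reverse).prod := by
          rw [List.map_reverse]
      _ = (((List.ofFn fun i : Fin n => exp (-H i)).map norm)).prod := List.prod_reverse _
      _ ≤ Real.exp S := h2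
  -- summable differences
  have hHle : ∀ n, ‖H n‖ ≤ S := fun n => Summable.le_tsum hsum n (fun _ _ => norm_nonneg _)
  have hdiffsum : Summable fun n => Real.exp S * (‖H n‖ * Real.exp S) := by
    have : Summable fun n => Real.exp S * Real.exp S * ‖H n‖ := hsum.mul_left _
    convert this using 2 with n
    ring
  have hCcauchy : CauchySeq Cseq := by
    apply cauchySeq_of_summable_dist
    refine Summable.of_nonneg_of_le (fun n => dist_nonneg) (fun n => ?_) hdiffsum
    rw [dist_eq_norm, hCrec n]
    calc ‖Cseq n - Cseq n * exp (H n)‖ = ‖Cseq n * (1 - exp (H n))‖ := by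
          rw [mul_sub, mul_one]
      _ ≤ ‖Cseq n‖ * ‖1 - exp (H n)‖ := norm_mul_le _ _
      _ ≤ Real.exp S * (‖H n‖ * Real.exp S) := by
          apply mul_le_mul (hCbd n) _ (norm_nonneg _) (Real.exp_pos _).le
          rw [norm_sub_rev]
          refine (aux_norm_exp_sub_one_le (H n)).trans ?_
          exact mul_le_mul_of_nonneg_left (Real.exp_le_exp.mpr (hHle n)) (norm_nonneg _)
  have hDcauchy : CauchySeq Dseq := by
    apply cauchySeq_of_summable_dist
    refine Summable.of_nonneg_of_le (fun n => dist_nonneg) (fun n => ?_) hdiffsum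
    rw [dist_eq_norm, hDrec n]
    calc ‖Dseq n - exp (-H n) * Dseq n‖ = ‖(1 - exp (-H n)) * Dseq n‖ := by
          rw [sub_mul, one_mul]
      _ ≤ ‖1 - exp (-H n)‖ * ‖Dseq n‖ := norm_mul_le _ _
      _ ≤ ‖H n‖ * Real.exp S * Real.exp S := by
          apply mul_le_mul _ (hDbd n) (norm_nonneg _) (by positivity)
          rw [norm_sub_rev]
          refine (aux_norm_exp_sub_one_le (-H n)).trans ?_
          rw [norm_neg]
          exact mul_le_mul_of_nonneg_left (Real.exp_le_exp.mpr (hHle n)) (norm_nonneg _)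
      _ = Real.exp S * (‖H n‖ * Real.exp S) := by ring
  obtain ⟨C, hC⟩ := cauchySeq_tendsto_of_complete hCcauchy
  obtain ⟨D, hD⟩ := cauchySeq_tendsto_of_complete hDcauchy
  refine ⟨C, D, hC, hD, ?_, ?_⟩
  · have h1 : ∀ n, Cseq n * Dseq n = 1 := by
      intro n
      induction n with
      | zero => simp [hCseq, hDseq]
      | succ n ih =>
          rw [hCrec, hDrec, mul_assoc, ← mul_assoc (exp (H n)), hexpinv n, one_mul, ih]
    have := (hC.mul hD)
    simp_rw [h1] at this
    exact tendsto_nhds_unique this tendsto_const_nhds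
  · have h1 : ∀ n, Dseq n * Cseq n = 1 := by
      intro n
      induction n with
      | zero => simp [hCseq, hDseq]
      | succ n ih =>
          rw [hCrec, hDrec, mul_assoc, ← mul_assoc (Dseq n), ih, one_mul, hexpinv' n]
    have := (hD.mul hC)
    simp_rw [h1] at this
    exact tendsto_nhds_unique this tendsto_const_nhds
end
end

section
/- Let ℓ > 0 and let 𝕀 : L²(0, ℓ) → L²(0, ℓ) be the integration operator (𝕀 f)(x) = i ∫_x^ℓ f(t) dt. Then: (i) the spectrum of 𝕀 is {0}; (ii) for every z ∈ ℂ with z ≠ 0, the operator 𝕀 − z I is invertible and ((𝕀 − z I)⁻¹ f)(x) = −(1/z) f(x) − (i/z²) ∫_x^ℓ e^{(i/z)(t − x)} f(t) dt for a.e. x; (iii) with h0 the constant function h0(x) = 1/√ℓ on (0, ℓ), one has 1 − i ℓ ⟨(𝕀 − z I)⁻¹ h0, h0⟩ = e^{i ℓ / z} for every z ≠ 0. -/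
noncomputable section

open MeasureTheory

/-- Lebesgue measure restricted to the interval `(0, l)`. -/
def muI (l : ℝ) : Measure ℝ := volume.restrict (Set.Ioo 0 l)

namespace S16


def muI (l : ℝ) : Measure ℝ := volume.restrict (Set.Ioo 0 l)


instance (l : ℝ) : IsFiniteMeasure (muI l) := by
  constructor
  rw [muI, Measure.restrict_apply_univ]
  exact measure_Ioo_lt_top

lemma integrable_of_L2 {l : ℝ} (f : Lp ℂ 2 (muI l)) : Integrable f (muI l) :=
  (Lp.memLp f).integrable (by norm_num)

lemma memℒp_exp (l : ℝ) (c : ℂ) :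
    MemLp (fun t : ℝ => Complex.exp (c * t)) ⊤ (muI l) := by
  apply memLp_top_of_bound
    (Continuous.aestronglyMeasurable (by continuity))
    (Real.exp (|c.re| * |l|))
  filter_upwards [ae_restrict_mem (measurableSet_Ioo : MeasurableSet (Set.Ioo 0 l))] with x hx
  rw [Complex.norm_exp]
  apply Real.exp_le_exp.2
  have : (c * x).re = c.re * x := by simp
  rw [this]
  have hx0 : (0:ℝ) ≤ x := le_of_lt hx.1
  have hxl : x ≤ |l| := le_trans (le_of_lt hx.2) (le_abs_self l)
  calc c.re * x ≤ |c.re * x| := le_abs_self _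
    _ = |c.re| * |x| := abs_mul _ _
    _ ≤ |c.re| * |l| := by
        apply mul_le_mul_of_nonneg_left _ (abs_nonneg _)
        rwa [abs_of_nonneg hx0]

/-- Multiplication by an essentially bounded function as a CLM on L². -/
def mulOp {l : ℝ} (φ : ℝ → ℂ) (hφ : MemLp φ ⊤ (muI l)) :
    Lp ℂ 2 (muI l) →L[ℂ] Lp ℂ 2 (muI l) :=
  LinearMap.mkContinuous
    { toFun := fun f => ((Lp.memLp f).smul (p := ⊤) (r := 2) hφ).toLp (φ • ⇑f)
      map_add' := fun f g => by
        apply Lp.ext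
        filter_upwards [MemLp.coeFn_toLp (((Lp.memLp (f+g)).smul (p := ⊤) (r := 2) hφ)),
          MemLp.coeFn_toLp (((Lp.memLp f).smul (p := ⊤) (r := 2) hφ)),
          MemLp.coeFn_toLp (((Lp.memLp g).smul (p := ⊤) (r := 2) hφ)),
          Lp.coeFn_add f g,
          Lp.coeFn_add (((Lp.memLp f).smul (p := ⊤) (r := 2) hφ).toLp (φ • ⇑f))
            (((Lp.memLp g).smul (p := ⊤) (r := 2) hφ).toLp (φ • ⇑g))] with x h1 h2 h3 h4 h5
        rw [h1, h5, Pi.add_apply, h2, h3, Pi.smul_apply', Pi.smul_apply', Pi.smul_apply', h4,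
          Pi.add_apply, smul_add]
      map_smul' := fun c f => by
        apply Lp.ext
        filter_upwards [MemLp.coeFn_toLp (((Lp.memLp (c • f)).smul (p := ⊤) (r := 2) hφ)),
          MemLp.coeFn_toLp (((Lp.memLp f).smul (p := ⊤) (r := 2) hφ)),
          Lp.coeFn_smul c f,
          Lp.coeFn_smul c (((Lp.memLp f).smul (p := ⊤) (r := 2) hφ).toLp (φ • ⇑f))] with x h1 h2 h3 h4
        simp only [RingHom.id_apply]
        rw [h1, h4, Pi.smul_apply, h2, Pi.smul_apply', Pi.smul_apply', h3, Pi.smul_apply, smul_comm] }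
    (eLpNorm φ ⊤ (muI l)).toReal
    (fun f => by
      simp only [LinearMap.coe_mk, AddHom.coe_mk]
      rw [Lp.norm_toLp, Lp.norm_def]
      rw [← ENNReal.toReal_mul]
      apply ENNReal.toReal_mono
      · exact ENNReal.mul_ne_top hφ.eLpNorm_ne_top (Lp.eLpNorm_ne_top f)
      · exact eLpNorm_smul_le_eLpNorm_top_mul_eLpNorm 2 (Lp.aestronglyMeasurable f) φ)

lemma mulOp_apply {l : ℝ} (φ : ℝ → ℂ) (hφ : MemLp φ ⊤ (muI l)) (f : Lp ℂ 2 (muI l)) :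
    (mulOp φ hφ f : ℝ → ℂ) =ᵐ[muI l] fun x => φ x * (f : ℝ → ℂ) x := by
  filter_upwards [MemLp.coeFn_toLp (((Lp.memLp f).smul (p := ⊤) (r := 2) hφ))] with x h1
  rw [mulOp] at *
  simpa [smul_eq_mul] using h1



lemma integral_exp_Ioo {a b : ℝ} (hab : a ≤ b) {c : ℂ} (hc : c ≠ 0) :
    ∫ t in Set.Ioo a b, Complex.exp (c * t) =
      (Complex.exp (c * b) - Complex.exp (c * a)) / c := by
  rw [← MeasureTheory.integral_Ioc_eq_integral_Ioo, ← intervalIntegral.integral_of_le hab]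
  exact integral_exp_mul_complex hc

lemma swap_lemma {μ : Measure ℝ} [IsFiniteMeasure μ] {g h : ℝ → ℂ}
    (hg : Integrable g μ) (hh : Integrable h μ) (x : ℝ) :
    ∫ t in Set.Ioi x, (g t * ∫ s in Set.Ioi t, h s ∂μ) ∂μ
      = ∫ s in Set.Ioi x, (∫ t in Set.Ioo x s, g t ∂μ) * h s ∂μ := by
  set T : Set (ℝ × ℝ) := {p : ℝ × ℝ | x < p.1 ∧ p.1 < p.2} with hT
  set F : ℝ → ℝ → ℂ := fun t s => T.indicator (fun p => g p.1 * h p.2) (t, s) with hF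
  have hS : MeasurableSet T := by
    apply MeasurableSet.inter
    · exact measurable_fst measurableSet_Ioi
    · exact measurableSet_lt measurable_fst measurable_snd
  have hFunc : Function.uncurry F = T.indicator (fun p => g p.1 * h p.2) := by
    ext p; simp [Function.uncurry, hF]
  have hFint : Integrable (Function.uncurry F) (μ.prod μ) := by
    rw [hFunc]
    exact (hg.mul_prod hh).indicator hS
  have h1 : ∀ t, (∫ s, F t s ∂μ)
      = Set.indicator (Set.Ioi x) (fun t => g t * ∫ s in Set.Ioi t, h s ∂μ) t := by
    intro t
    by_cases hxt : x < t
    · rw [Set.indicator_of_mem (Set.mem_Ioi.mpr hxt)]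
      have : ∀ s, F t s = Set.indicator (Set.Ioi t) (fun s => g t * h s) s := by
        intro s
        simp only [hF, Set.indicator_apply, hT, Set.mem_setOf_eq, Set.mem_Ioi, hxt, true_and]
      rw [show (fun s => F t s) = _ from funext this, integral_indicator measurableSet_Ioi,
        integral_const_mul]
    · rw [Set.indicator_of_notMem (fun hm => hxt (Set.mem_Ioi.mp hm))]
      have : ∀ s, F t s = 0 := by
        intro s
        simp only [hF, Set.indicator_apply, hT, Set.mem_setOf_eq, hxt, false_and, if_false]
      simp [this]
  have h2 : ∀ s, (∫ t, F t s ∂μ) = (∫ t in Set.Ioo x s, g t ∂μ) * h s := by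
    intro s
    have : ∀ t, F t s = Set.indicator (Set.Ioo x s) (fun t => g t * h s) t := by
      intro t
      simp only [hF, Set.indicator_apply, hT, Set.mem_setOf_eq, Set.mem_Ioo]
    rw [show (fun t => F t s) = _ from funext this, integral_indicator measurableSet_Ioo,
      integral_mul_const]
  calc ∫ t in Set.Ioi x, (g t * ∫ s in Set.Ioi t, h s ∂μ) ∂μ
      = ∫ t, ∫ s, F t s ∂μ ∂μ := by
        rw [show (fun t => ∫ s, F t s ∂μ) = _ from funext h1,
          integral_indicator measurableSet_Ioi]
    _ = ∫ s, ∫ t, F t s ∂μ ∂μ := integral_integral_swap hFint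
    _ = ∫ s, (∫ t in Set.Ioo x s, g t ∂μ) * h s ∂μ := by
        rw [show (fun s => ∫ t, F t s ∂μ) = _ from funext h2]
    _ = ∫ s in Set.Ioi x, (∫ t in Set.Ioo x s, g t ∂μ) * h s ∂μ := by
        rw [← integral_indicator measurableSet_Ioi]
        congr 1
        ext s
        by_cases hs : x < s
        · rw [Set.indicator_of_mem (Set.mem_Ioi.mpr hs)]
        · rw [Set.indicator_of_notMem (fun hm => hs (Set.mem_Ioi.mp hm)), Set.Ioo_eq_empty (fun hlt => hs hlt),
            Measure.restrict_empty, integral_zero_measure, zero_mul]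


variable {l : ℝ}

lemma integrable_exp_mul (c : ℂ) (f : Lp ℂ 2 (muI l)) :
    Integrable (fun t : ℝ => Complex.exp (c * t) * (f : ℝ → ℂ) t) (muI l) := by
  have h1 : MemLp (⇑f) 1 (muI l) := memLp_one_iff_integrable.2 (integrable_of_L2 f)
  have h2 := h1.smul (p := ⊤) (r := 1) (memℒp_exp l c)
  exact memLp_one_iff_integrable.1 h2

def efun (z : ℂ) : ℝ → ℂ := fun t : ℝ => Complex.exp (Complex.I / z * t)
def ebar (z : ℂ) : ℝ → ℂ := fun t : ℝ => Complex.exp (-(Complex.I / z) * t)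

/-- The operator `A = M_{ebar} ∘ 𝕀 ∘ M_{efun}`. -/
def Aop (l : ℝ) (z : ℂ) (𝕀 : Lp ℂ 2 (muI l) →L[ℂ] Lp ℂ 2 (muI l)) :
    Lp ℂ 2 (muI l) →L[ℂ] Lp ℂ 2 (muI l) :=
  (mulOp (ebar z) (memℒp_exp l _)).comp (𝕀.comp (mulOp (efun z) (memℒp_exp l _)))

lemma Aop_apply (z : ℂ) (𝕀 : Lp ℂ 2 (muI l) →L[ℂ] Lp ℂ 2 (muI l))
    (h𝕀 : ∀ f : Lp ℂ 2 (muI l), ∀ᵐ x ∂(muI l),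
      (𝕀 f : ℝ → ℂ) x = Complex.I * ∫ t in Set.Ioi x, (f : ℝ → ℂ) t ∂(muI l))
    (f : Lp ℂ 2 (muI l)) :
    (Aop l z 𝕀 f : ℝ → ℂ) =ᵐ[muI l] fun x =>
      ebar z x * (Complex.I * ∫ t in Set.Ioi x, efun z t * (f : ℝ → ℂ) t ∂(muI l)) := by
  have hMe := mulOp_apply (efun z) (memℒp_exp l _) f
  have key : ∀ x : ℝ,
      (∫ t in Set.Ioi x, (mulOp (efun z) (memℒp_exp l _) f : ℝ → ℂ) t ∂(muI l))
        = ∫ t in Set.Ioi x, efun z t * (f : ℝ → ℂ) t ∂(muI l) := by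
    intro x
    exact integral_congr_ae (ae_restrict_of_ae hMe)
  filter_upwards [mulOp_apply (ebar z) (memℒp_exp l _)
      (𝕀 (mulOp (efun z) (memℒp_exp l _) f)),
    h𝕀 (mulOp (efun z) (memℒp_exp l _) f)] with x h1 h2
  rw [Aop, ContinuousLinearMap.comp_apply, ContinuousLinearMap.comp_apply, h1, h2, key]

lemma exp_neg_inv (z : ℂ) (r : ℝ) :
    Complex.exp (-(Complex.I / z) * r) = (Complex.exp (Complex.I / z * r))⁻¹ := by
  rw [neg_mul, Complex.exp_neg]

lemma Icomp_Aop (z : ℂ) (hz : z ≠ 0) (𝕀 : Lp ℂ 2 (muI l) →L[ℂ] Lp ℂ 2 (muI l))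
    (h𝕀 : ∀ f : Lp ℂ 2 (muI l), ∀ᵐ x ∂(muI l),
      (𝕀 f : ℝ → ℂ) x = Complex.I * ∫ t in Set.Ioi x, (f : ℝ → ℂ) t ∂(muI l)) :
    𝕀.comp (Aop l z 𝕀) = z • Aop l z 𝕀 - z • 𝕀 := by
  have hc : Complex.I / z ≠ 0 := div_ne_zero Complex.I_ne_zero hz
  have hcn : -(Complex.I / z) ≠ 0 := neg_ne_zero.2 hc
  ext f
  have hef : Integrable (fun t : ℝ => efun z t * (f : ℝ → ℂ) t) (muI l) :=
    integrable_exp_mul _ f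
  have hf : Integrable (f : ℝ → ℂ) (muI l) := integrable_of_L2 f
  have hebar : Integrable (ebar z) (muI l) := (memℒp_exp l _).integrable le_top
  have hAf := Aop_apply z 𝕀 h𝕀 f
  have hRHS : (((z • Aop l z 𝕀 - z • 𝕀) f : Lp ℂ 2 (muI l)) : ℝ → ℂ) =ᵐ[muI l]
      fun x => z * ((Aop l z 𝕀 f : ℝ → ℂ) x) - z * ((𝕀 f : ℝ → ℂ) x) := by
    have h1 : (z • Aop l z 𝕀 - z • 𝕀) f = z • (Aop l z 𝕀 f) - z • (𝕀 f) := by simp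
    rw [h1]
    filter_upwards [Lp.coeFn_sub (z • (Aop l z 𝕀 f)) (z • (𝕀 f)),
      Lp.coeFn_smul z (Aop l z 𝕀 f), Lp.coeFn_smul z (𝕀 f)] with x k1 k2 k3
    rw [k1, Pi.sub_apply, k2, k3, Pi.smul_apply, Pi.smul_apply, smul_eq_mul, smul_eq_mul]
  have key1 : ∀ x : ℝ, (∫ t in Set.Ioi x, ((Aop l z 𝕀 f : Lp ℂ 2 (muI l)) : ℝ → ℂ) t ∂(muI l))
      = ∫ t in Set.Ioi x, ebar z t *
          (Complex.I * ∫ s in Set.Ioi t, efun z s * (f : ℝ → ℂ) s ∂(muI l)) ∂(muI l) :=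
    fun x => integral_congr_ae (ae_restrict_of_ae hAf)
  filter_upwards [h𝕀 ((Aop l z 𝕀) f), hRHS, hAf, h𝕀 f,
    (ae_restrict_mem measurableSet_Ioo : ∀ᵐ x ∂(muI l), x ∈ Set.Ioo 0 l)]
    with x k1 k2 k3 k4 hx
  rw [ContinuousLinearMap.comp_apply, k1, k2, k3, k4, key1 x]
  -- pull `I` out of the integral
  have e1 : (∫ t in Set.Ioi x, ebar z t *
        (Complex.I * ∫ s in Set.Ioi t, efun z s * (f : ℝ → ℂ) s ∂(muI l)) ∂(muI l))
      = Complex.I * ∫ t in Set.Ioi x, ebar z t *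
          (∫ s in Set.Ioi t, efun z s * (f : ℝ → ℂ) s ∂(muI l)) ∂(muI l) := by
    rw [← integral_const_mul]
    apply integral_congr_ae (Filter.Eventually.of_forall fun t => by ring)
  rw [e1, swap_lemma hebar hef x]
  -- evaluate the inner integrals
  have hinv : (-(Complex.I / z))⁻¹ = Complex.I * z := by
    rw [inv_neg, inv_div, Complex.div_I]; ring
  have e2 : (∫ s in Set.Ioi x, (∫ t in Set.Ioo x s, ebar z t ∂(muI l)) *
        (efun z s * (f : ℝ → ℂ) s) ∂(muI l))
      = ∫ s in Set.Ioi x, ((Complex.I * z) * (f : ℝ → ℂ) s -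
          ((Complex.I * z) * ebar z x) * (efun z s * (f : ℝ → ℂ) s)) ∂(muI l) := by
    apply integral_congr_ae
    filter_upwards [ae_restrict_mem measurableSet_Ioi,
      ae_restrict_of_ae (ae_restrict_mem measurableSet_Ioo : ∀ᵐ s ∂(muI l), s ∈ Set.Ioo 0 l)]
      with s hs1 hs2
    have hsub : Set.Ioo x s ⊆ Set.Ioo 0 l :=
      fun t ht => ⟨lt_trans hx.1 ht.1, lt_trans ht.2 hs2.2⟩
    have hinner : (∫ t in Set.Ioo x s, ebar z t ∂(muI l))
        = (Complex.exp (-(Complex.I / z) * s) - Complex.exp (-(Complex.I / z) * x)) /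
            (-(Complex.I / z)) := by
      rw [show (muI l) = volume.restrict (Set.Ioo 0 l) from rfl,
        Measure.restrict_restrict measurableSet_Ioo,
        Set.inter_eq_self_of_subset_left hsub]
      exact integral_exp_Ioo (le_of_lt hs1) hcn
    rw [hinner, div_eq_mul_inv, hinv]
    simp only [ebar, efun, exp_neg_inv]
    have h2 := Complex.exp_ne_zero (Complex.I / z * (s : ℂ))
    field_simp
  rw [e2, integral_sub ((hf.restrict).const_mul _) ((hef.restrict).const_mul _),
    integral_const_mul, integral_const_mul, ← mul_assoc Complex.I Complex.I, Complex.I_mul_I,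
    neg_one_mul]
  simp only [ebar, efun, exp_neg_inv]
  ring

lemma Aop_comp_I (z : ℂ) (hz : z ≠ 0) (𝕀 : Lp ℂ 2 (muI l) →L[ℂ] Lp ℂ 2 (muI l))
    (h𝕀 : ∀ f : Lp ℂ 2 (muI l), ∀ᵐ x ∂(muI l),
      (𝕀 f : ℝ → ℂ) x = Complex.I * ∫ t in Set.Ioi x, (f : ℝ → ℂ) t ∂(muI l)) :
    (Aop l z 𝕀).comp 𝕀 = z • Aop l z 𝕀 - z • 𝕀 := by
  have hc : Complex.I / z ≠ 0 := div_ne_zero Complex.I_ne_zero hz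
  ext f
  have hef : Integrable (fun t : ℝ => efun z t * (f : ℝ → ℂ) t) (muI l) :=
    integrable_exp_mul _ f
  have hf : Integrable (f : ℝ → ℂ) (muI l) := integrable_of_L2 f
  have hefn : Integrable (efun z) (muI l) := (memℒp_exp l _).integrable le_top
  have hAf := Aop_apply z 𝕀 h𝕀 f
  have hRHS : (((z • Aop l z 𝕀 - z • 𝕀) f : Lp ℂ 2 (muI l)) : ℝ → ℂ) =ᵐ[muI l]
      fun x => z * ((Aop l z 𝕀 f : ℝ → ℂ) x) - z * ((𝕀 f : ℝ → ℂ) x) := by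
    have h1 : (z • Aop l z 𝕀 - z • 𝕀) f = z • (Aop l z 𝕀 f) - z • (𝕀 f) := by simp
    rw [h1]
    filter_upwards [Lp.coeFn_sub (z • (Aop l z 𝕀 f)) (z • (𝕀 f)),
      Lp.coeFn_smul z (Aop l z 𝕀 f), Lp.coeFn_smul z (𝕀 f)] with x k1 k2 k3
    rw [k1, Pi.sub_apply, k2, k3, Pi.smul_apply, Pi.smul_apply, smul_eq_mul, smul_eq_mul]
  have key1 : ∀ x : ℝ, (∫ t in Set.Ioi x, efun z t * ((𝕀 f : Lp ℂ 2 (muI l)) : ℝ → ℂ) t ∂(muI l))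
      = ∫ t in Set.Ioi x, efun z t *
          (Complex.I * ∫ s in Set.Ioi t, (f : ℝ → ℂ) s ∂(muI l)) ∂(muI l) :=
    fun x => integral_congr_ae (ae_restrict_of_ae ((h𝕀 f).mono fun t ht => by simp only []; rw [ht]))
  filter_upwards [Aop_apply z 𝕀 h𝕀 (𝕀 f), hRHS, hAf, h𝕀 f,
    (ae_restrict_mem measurableSet_Ioo : ∀ᵐ x ∂(muI l), x ∈ Set.Ioo 0 l)]
    with x k1 k2 k3 k4 hx
  rw [ContinuousLinearMap.comp_apply, k1, k2, k3, k4, key1 x]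
  have e1 : (∫ t in Set.Ioi x, efun z t *
        (Complex.I * ∫ s in Set.Ioi t, (f : ℝ → ℂ) s ∂(muI l)) ∂(muI l))
      = Complex.I * ∫ t in Set.Ioi x, efun z t *
          (∫ s in Set.Ioi t, (f : ℝ → ℂ) s ∂(muI l)) ∂(muI l) := by
    rw [← integral_const_mul]
    exact integral_congr_ae (Filter.Eventually.of_forall fun t => by ring)
  rw [e1, swap_lemma hefn hf x]
  have hinv : (Complex.I / z)⁻¹ = -(Complex.I * z) := by
    rw [inv_div, Complex.div_I]; ring
  have e2 : (∫ s in Set.Ioi x, (∫ t in Set.Ioo x s, efun z t ∂(muI l)) *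
        (f : ℝ → ℂ) s ∂(muI l))
      = ∫ s in Set.Ioi x, ((-(Complex.I * z)) * (efun z s * (f : ℝ → ℂ) s) -
          ((-(Complex.I * z)) * efun z x) * (f : ℝ → ℂ) s) ∂(muI l) := by
    apply integral_congr_ae
    filter_upwards [ae_restrict_mem measurableSet_Ioi,
      ae_restrict_of_ae (ae_restrict_mem measurableSet_Ioo : ∀ᵐ s ∂(muI l), s ∈ Set.Ioo 0 l)]
      with s hs1 hs2
    have hsub : Set.Ioo x s ⊆ Set.Ioo 0 l :=
      fun t ht => ⟨lt_trans hx.1 ht.1, lt_trans ht.2 hs2.2⟩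
    have hinner : (∫ t in Set.Ioo x s, efun z t ∂(muI l))
        = (Complex.exp (Complex.I / z * s) - Complex.exp (Complex.I / z * x)) /
            (Complex.I / z) := by
      rw [show (muI l) = volume.restrict (Set.Ioo 0 l) from rfl,
        Measure.restrict_restrict measurableSet_Ioo,
        Set.inter_eq_self_of_subset_left hsub]
      exact integral_exp_Ioo (le_of_lt hs1) hc
    rw [hinner, div_eq_mul_inv, hinv]
    simp only [efun]
    ring
  rw [e2, integral_sub ((hef.restrict).const_mul _) ((hf.restrict).const_mul _),
    integral_const_mul, integral_const_mul, ← mul_assoc Complex.I Complex.I, Complex.I_mul_I,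
    neg_one_mul]
  simp only [ebar, efun, exp_neg_inv]
  have h2 := Complex.exp_ne_zero (Complex.I / z * (x : ℂ))
  field_simp
  ring

lemma unit_alg {M : Type*} [Ring M] [Algebra ℂ M] {z : ℂ} (hz : z ≠ 0) {B A : M}
    (h1 : B * A = z • A - z • B) (h2 : A * B = z • A - z • B) :
    (B - z • 1) * (-z⁻¹ • 1 - (z⁻¹ * z⁻¹) • A) = 1 ∧
      (-z⁻¹ • 1 - (z⁻¹ * z⁻¹) • A) * (B - z • 1) = 1 := by
  constructor
  · simp only [mul_sub, sub_mul, smul_mul_assoc, mul_smul_comm, mul_one, one_mul]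
    rw [h1]
    match_scalars <;> field_simp <;> ring
  · simp only [mul_sub, sub_mul, smul_mul_assoc, mul_smul_comm, mul_one, one_mul]
    rw [h2]
    match_scalars <;> field_simp <;> ring

/-- The resolvent operator. -/
def Rop (l : ℝ) (z : ℂ) (𝕀 : Lp ℂ 2 (muI l) →L[ℂ] Lp ℂ 2 (muI l)) :
    Lp ℂ 2 (muI l) →L[ℂ] Lp ℂ 2 (muI l) :=
  -z⁻¹ • 1 - (z⁻¹ * z⁻¹) • Aop l z 𝕀

lemma isUnit_and_inverse (z : ℂ) (hz : z ≠ 0) (𝕀 : Lp ℂ 2 (muI l) →L[ℂ] Lp ℂ 2 (muI l))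
    (h𝕀 : ∀ f : Lp ℂ 2 (muI l), ∀ᵐ x ∂(muI l),
      (𝕀 f : ℝ → ℂ) x = Complex.I * ∫ t in Set.Ioi x, (f : ℝ → ℂ) t ∂(muI l)) :
    IsUnit (𝕀 - z • (1 : Lp ℂ 2 (muI l) →L[ℂ] Lp ℂ 2 (muI l))) ∧
      Ring.inverse (𝕀 - z • (1 : Lp ℂ 2 (muI l) →L[ℂ] Lp ℂ 2 (muI l))) = Rop l z 𝕀 := by
  have h1 : 𝕀 * Aop l z 𝕀 = z • Aop l z 𝕀 - z • 𝕀 := by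
    rw [ContinuousLinearMap.mul_def]; exact Icomp_Aop z hz 𝕀 h𝕀
  have h2 : Aop l z 𝕀 * 𝕀 = z • Aop l z 𝕀 - z • 𝕀 := by
    rw [ContinuousLinearMap.mul_def]; exact Aop_comp_I z hz 𝕀 h𝕀
  obtain ⟨hBR, hRB⟩ := unit_alg hz h1 h2
  exact ⟨⟨⟨_, Rop l z 𝕀, hBR, hRB⟩, rfl⟩,
    Ring.inverse_unit ⟨_, Rop l z 𝕀, hBR, hRB⟩⟩

lemma Rop_apply (z : ℂ) (𝕀 : Lp ℂ 2 (muI l) →L[ℂ] Lp ℂ 2 (muI l))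
    (h𝕀 : ∀ f : Lp ℂ 2 (muI l), ∀ᵐ x ∂(muI l),
      (𝕀 f : ℝ → ℂ) x = Complex.I * ∫ t in Set.Ioi x, (f : ℝ → ℂ) t ∂(muI l))
    (f : Lp ℂ 2 (muI l)) :
    ((Rop l z 𝕀 f : Lp ℂ 2 (muI l)) : ℝ → ℂ) =ᵐ[muI l] fun x =>
      -(1 / z) * (f : ℝ → ℂ) x -
        (Complex.I / z ^ 2) *
          ∫ t in Set.Ioi x,
            Complex.exp (Complex.I / z * ((t : ℂ) - (x : ℂ))) * (f : ℝ → ℂ) t ∂(muI l) := by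
  have h1 : Rop l z 𝕀 f = (-z⁻¹) • f - (z⁻¹ * z⁻¹) • (Aop l z 𝕀 f) := by
    simp [Rop, sub_smul, ContinuousLinearMap.sub_apply]
  rw [h1]
  filter_upwards [Lp.coeFn_sub ((-z⁻¹) • f) ((z⁻¹ * z⁻¹) • (Aop l z 𝕀 f)),
    Lp.coeFn_smul (-z⁻¹) f, Lp.coeFn_smul (z⁻¹ * z⁻¹) (Aop l z 𝕀 f),
    Aop_apply z 𝕀 h𝕀 f] with x k1 k2 k3 k4
  rw [k1, Pi.sub_apply, k2, k3, Pi.smul_apply, Pi.smul_apply, smul_eq_mul, smul_eq_mul, k4]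
  have e1 : (∫ t in Set.Ioi x,
        Complex.exp (Complex.I / z * ((t : ℂ) - (x : ℂ))) * (f : ℝ → ℂ) t ∂(muI l))
      = Complex.exp (-(Complex.I / z) * x) *
          ∫ t in Set.Ioi x, efun z t * (f : ℝ → ℂ) t ∂(muI l) := by
    rw [← integral_const_mul]
    apply integral_congr_ae
    apply Filter.Eventually.of_forall
    intro t
    simp only [efun, ← mul_assoc, ← Complex.exp_add]
    congr 2
    ring
  rw [e1]
  simp only [ebar]
  ring

lemma spectrum_eq (𝕀 : Lp ℂ 2 (muI l) →L[ℂ] Lp ℂ 2 (muI l))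
    (hnt : Nontrivial (Lp ℂ 2 (muI l)))
    (hUnit : ∀ z : ℂ, z ≠ 0 → IsUnit (𝕀 - z • (1 : Lp ℂ 2 (muI l) →L[ℂ] Lp ℂ 2 (muI l)))) :
    spectrum ℂ 𝕀 = {0} := by
  haveI := hnt
  obtain ⟨u, v, huv⟩ := hnt
  haveI : Nontrivial (Lp ℂ 2 (muI l) →L[ℂ] Lp ℂ 2 (muI l)) := by
    refine ⟨1, 0, fun h => huv ?_⟩
    have := congrArg (fun T : Lp ℂ 2 (muI l) →L[ℂ] Lp ℂ 2 (muI l) => T (u - v)) h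
    simpa [sub_eq_zero] using this
  have hsub : spectrum ℂ 𝕀 ⊆ {0} := by
    intro w hw
    by_contra hw0
    have hne : w ≠ 0 := fun h => hw0 (by simp [h])
    have hiu := (hUnit w hne).neg
    rw [neg_sub] at hiu
    rw [spectrum.mem_iff] at hw
    exact hw (by rwa [Algebra.algebraMap_eq_smul_one])
  have hne : (spectrum ℂ 𝕀).Nonempty := spectrum.nonempty 𝕀
  obtain ⟨w, hw⟩ := hne
  have hw0 : w = 0 := hsub hw
  subst hw0
  exact Set.Subset.antisymm hsub (by intro y hy; rw [Set.mem_singleton_iff] at hy; rwa [hy])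

lemma nontrivial_Lp (hl : 0 < l) (h0 : Lp ℂ 2 (muI l))
    (hh0 : ∀ᵐ x ∂(muI l), (h0 : ℝ → ℂ) x = ((1 / Real.sqrt l : ℝ) : ℂ)) :
    Nontrivial (Lp ℂ 2 (muI l)) := by
  refine ⟨h0, 0, fun h => ?_⟩
  have hμ : muI l ≠ 0 := by
    intro hz
    have : (muI l) (Set.Ioo 0 l) = 0 := by rw [hz]; rfl
    rw [show muI l = volume.restrict (Set.Ioo 0 l) from rfl,
      Measure.restrict_apply measurableSet_Ioo, Set.inter_self, Real.volume_Ioo] at this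
    simp [hl, ENNReal.ofReal_eq_zero] at this
    linarith
  haveI : (ae (muI l)).NeBot := ae_neBot.2 hμ
  have h2 : (h0 : ℝ → ℂ) =ᵐ[muI l] 0 := by rw [h]; exact Lp.coeFn_zero _ _ _
  obtain ⟨x, hx1, hx2⟩ := (hh0.and h2).exists
  have hc : ((1 / Real.sqrt l : ℝ) : ℂ) = 0 := by
    rw [← hx1, hx2]; rfl
  rw [Complex.ofReal_eq_zero] at hc
  have hs : 0 < Real.sqrt l := Real.sqrt_pos.2 hl
  rw [div_eq_zero_iff] at hc
  rcases hc with h' | h' <;> [simp at h'; linarith]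

lemma part3 (hl : 0 < l) (z : ℂ) (hz : z ≠ 0)
    (𝕀 : Lp ℂ 2 (muI l) →L[ℂ] Lp ℂ 2 (muI l))
    (h𝕀 : ∀ f : Lp ℂ 2 (muI l), ∀ᵐ x ∂(muI l),
      (𝕀 f : ℝ → ℂ) x = Complex.I * ∫ t in Set.Ioi x, (f : ℝ → ℂ) t ∂(muI l))
    (h0 : Lp ℂ 2 (muI l))
    (hh0 : ∀ᵐ x ∂(muI l), (h0 : ℝ → ℂ) x = ((1 / Real.sqrt l : ℝ) : ℂ)) :
    1 - Complex.I * (l : ℂ) * (inner ℂ h0 (Rop l z 𝕀 h0) : ℂ) =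
      Complex.exp (Complex.I * (l : ℂ) / z) := by
  have hc : Complex.I / z ≠ 0 := div_ne_zero Complex.I_ne_zero hz
  have hcn : -(Complex.I / z) ≠ 0 := neg_ne_zero.2 hc
  set c0 : ℂ := ((1 / Real.sqrt l : ℝ) : ℂ) with hc0def
  set K : ℂ := -(c0 * c0) * Complex.exp (Complex.I / z * l) / z with hK
  -- the inner product as an integral
  have hinner : (inner ℂ h0 (Rop l z 𝕀 h0) : ℂ)
      = ∫ x, (starRingEnd ℂ) ((h0 : ℝ → ℂ) x) * ((Rop l z 𝕀 h0 : Lp ℂ 2 (muI l)) : ℝ → ℂ) x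
          ∂(muI l) := by
    rw [MeasureTheory.L2.inner_def]
    apply integral_congr_ae
    exact Filter.Eventually.of_forall fun x => by simp [RCLike.inner_apply, mul_comm]
  -- pointwise value of the integrand
  have hval : (fun x => (starRingEnd ℂ) ((h0 : ℝ → ℂ) x) *
        ((Rop l z 𝕀 h0 : Lp ℂ 2 (muI l)) : ℝ → ℂ) x)
      =ᵐ[muI l] fun x => K * Complex.exp (-(Complex.I / z) * x) := by
    filter_upwards [hh0, Rop_apply z 𝕀 h𝕀 h0,
      (ae_restrict_mem measurableSet_Ioo : ∀ᵐ x ∂(muI l), x ∈ Set.Ioo 0 l)] with x k1 k2 hx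
    have hset : Set.Ioi x ∩ Set.Ioo 0 l = Set.Ioo x l := by
      ext t
      exact ⟨fun ⟨a, b⟩ => ⟨a, b.2⟩, fun ⟨a, b⟩ => ⟨a, lt_trans hx.1 a, b⟩⟩
    have hin : (∫ t in Set.Ioi x,
          Complex.exp (Complex.I / z * ((t : ℂ) - (x : ℂ))) * (h0 : ℝ → ℂ) t ∂(muI l))
        = (Complex.exp (-(Complex.I / z) * x) *
            ((Complex.exp (Complex.I / z * l) - Complex.exp (Complex.I / z * x)) /
              (Complex.I / z))) * c0 := by
      rw [show (∫ t in Set.Ioi x,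
            Complex.exp (Complex.I / z * ((t : ℂ) - (x : ℂ))) * (h0 : ℝ → ℂ) t ∂(muI l))
          = ∫ t in Set.Ioi x, (Complex.exp (-(Complex.I / z) * x) *
              Complex.exp (Complex.I / z * t)) * c0 ∂(muI l) from
        integral_congr_ae ((ae_restrict_of_ae hh0).mono fun t ht => by
          simp only []
          rw [ht, ← Complex.exp_add]
          congr 2
          ring)]
      rw [integral_mul_const, integral_const_mul]
      congr 1
      rw [show (muI l) = volume.restrict (Set.Ioo 0 l) from rfl,
        Measure.restrict_restrict measurableSet_Ioi, hset]
      rw [integral_exp_Ioo (le_of_lt hx.2) hc]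
    rw [k2, hin, k1, Complex.conj_ofReal, hK, exp_neg_inv]
    simp only [← hc0def]
    have h1 := Complex.exp_ne_zero (Complex.I / z * (x : ℂ))
    field_simp
    ring
  rw [hinner, integral_congr_ae hval, integral_const_mul]
  have hIoo : (∫ x, Complex.exp (-(Complex.I / z) * x) ∂(muI l))
      = (Complex.exp (-(Complex.I / z) * l) - 1) / (-(Complex.I / z)) := by
    rw [show (muI l) = volume.restrict (Set.Ioo 0 l) from rfl]
    have := integral_exp_Ioo (le_of_lt hl) hcn (a := 0)
    simpa using this
  rw [hIoo, hK, exp_neg_inv]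
  have hc0sq : c0 * c0 = 1 / (l : ℂ) := by
    rw [hc0def, ← Complex.ofReal_mul, div_mul_div_comm, one_mul,
      Real.mul_self_sqrt hl.le]
    push_cast
    ring
  rw [show Complex.I * (l : ℂ) / z = Complex.I / z * l from by ring, hc0sq]
  have h1 := Complex.exp_ne_zero (Complex.I / z * (l : ℂ))
  have hl0 : (l : ℂ) ≠ 0 := Complex.ofReal_ne_zero.2 hl.ne'
  field_simp
  ring

end S16

/-- Spectrum and resolvent of the integration operator `(𝕀 f)(x) = i ∫_x^l f(t) dt` on
`L²(0, l)`: the spectrum is `{0}`; for `z ≠ 0` the operator `𝕀 - z` is invertible with the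
explicit resolvent kernel; and for the normalized constant function `h0 ≡ 1/√l` one has
`1 - i l ⟨(𝕀 - z)⁻¹ h0, h0⟩ = e^{i l / z}`. -/
theorem statement16
    (l : ℝ) (hl : 0 < l)
    (𝕀 : Lp ℂ 2 (muI l) →L[ℂ] Lp ℂ 2 (muI l))
    (h𝕀 : ∀ f : Lp ℂ 2 (muI l), ∀ᵐ x ∂(muI l),
      (𝕀 f : ℝ → ℂ) x = Complex.I * ∫ t in Set.Ioi x, (f : ℝ → ℂ) t ∂(muI l))
    (h0 : Lp ℂ 2 (muI l))
    (hh0 : ∀ᵐ x ∂(muI l), (h0 : ℝ → ℂ) x = ((1 / Real.sqrt l : ℝ) : ℂ)) :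
    spectrum ℂ 𝕀 = {0} ∧
    ∀ z : ℂ, z ≠ 0 →
      IsUnit (𝕀 - z • (1 : Lp ℂ 2 (muI l) →L[ℂ] Lp ℂ 2 (muI l))) ∧
      (∀ f : Lp ℂ 2 (muI l), ∀ᵐ x ∂(muI l),
        (Ring.inverse (𝕀 - z • (1 : Lp ℂ 2 (muI l) →L[ℂ] Lp ℂ 2 (muI l))) f : ℝ → ℂ) x =
          -(1 / z) * (f : ℝ → ℂ) x -
            (Complex.I / z ^ 2) *
              ∫ t in Set.Ioi x,
                Complex.exp (Complex.I / z * ((t : ℂ) - (x : ℂ))) * (f : ℝ → ℂ) t ∂(muI l)) ∧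
      1 - Complex.I * (l : ℂ) *
          (inner ℂ h0 (Ring.inverse (𝕀 - z • (1 : Lp ℂ 2 (muI l) →L[ℂ] Lp ℂ 2 (muI l))) h0) : ℂ) =
        Complex.exp (Complex.I * (l : ℂ) / z) := by
  have hUnit : ∀ z : ℂ, z ≠ 0 →
      IsUnit (𝕀 - z • (1 : Lp ℂ 2 (muI l) →L[ℂ] Lp ℂ 2 (muI l))) :=
    fun z hz => (S16.isUnit_and_inverse z hz 𝕀 h𝕀).1
  refine ⟨S16.spectrum_eq 𝕀 (S16.nontrivial_Lp hl h0 hh0) hUnit, fun z hz => ?_⟩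
  obtain ⟨hu, hinv⟩ := S16.isUnit_and_inverse z hz 𝕀 h𝕀
  refine ⟨hu, ?_, ?_⟩
  · intro f
    have := S16.Rop_apply z 𝕀 h𝕀 f
    rw [← hinv] at this
    exact this
  · have := S16.part3 hl z hz 𝕀 h𝕀 h0 hh0
    rw [← hinv] at this
    exact this
end
end
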